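/- arXiv:2205.12666 — 8 statements merged into one kernel-verified Lean document; each statement's English description precedes it below -/
import Mathlib

section
/- If (X,d) is a complete extended metric space, then (X,d_ℓ), where d_ℓ is the intrinsic metric associated to d, is also a complete extended metric space. -/
open ENNReal NNReal

/-- The intrinsic (length) extended distance associated to an extended metric:
the infimum of lengths `ℓ` of `1`-Lipschitz curves `[0, ℓ] → X` joining the two points. -/
noncomputable def intrinsicEDist {X : Type*} [EMetricSpace X] (x x' : X) : ℝ≥0∞ :=
  sInf {L : ℝ≥0∞ | ∃ ℓ : ℝ≥0, L = (ℓ : ℝ≥0∞) ∧ ∃ φ : ℝ → X,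
    LipschitzOnWith 1 φ (Set.Icc 0 (ℓ : ℝ)) ∧ φ 0 = x ∧ φ (ℓ : ℝ) = x'}

open Filter Set in
private lemma real_edist_eq (a b : ℝ) : edist a b = ENNReal.ofReal |a - b| := by
  rw [edist_dist, Real.dist_eq]

open Filter Set in
/-- `d ≤ d_ℓ`. -/
private lemma edist_le_intrinsicEDist {X : Type*} [EMetricSpace X] (x x' : X) :
    edist x x' ≤ intrinsicEDist x x' := by
  refine le_sInf ?_
  rintro L ⟨ℓ, rfl, φ, hlip, h0, h1⟩
  have h := hlip (x := 0) ⟨le_refl _, ℓ.coe_nonneg⟩ (y := (ℓ : ℝ)) ⟨ℓ.coe_nonneg, le_refl _⟩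
  rw [h0, h1] at h
  refine h.trans ?_
  rw [ENNReal.coe_one, one_mul, real_edist_eq]
  simp [abs_of_nonpos, ℓ.coe_nonneg, ENNReal.ofReal_coe_nnreal]

open Filter Set in
/-- Infinite concatenation of curves: if `v k` is joined to `v (k+1)` by a `1`-Lipschitz
curve of length `ℓ k`, the lengths are summable, and `v k → x`, then the intrinsic
distance from `v 0` to `x` is at most `∑ ℓ k`. -/
private lemma intrinsicEDist_le_tsum {X : Type*} [EMetricSpace X] (v : ℕ → X) (x : X)
    (ℓ : ℕ → ℝ≥0) (φ : ℕ → ℝ → X)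
    (hlip : ∀ k, LipschitzOnWith 1 (φ k) (Set.Icc 0 ((ℓ k : ℝ))))
    (h0 : ∀ k, φ k 0 = v k) (h1 : ∀ k, φ k ((ℓ k : ℝ)) = v (k + 1))
    (hsum : Summable ℓ)
    (hv : Tendsto v atTop (nhds x)) :
    intrinsicEDist (v 0) x ≤ ∑' k, (ℓ k : ℝ≥0∞) := by
  classical
  have hsumR : Summable fun k => (ℓ k : ℝ) := NNReal.summable_coe.2 hsum
  set S : ℝ≥0 := ∑' k, ℓ k with hSdef
  set Lr : ℝ := (S : ℝ) with hLrdef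
  have hLr_eq : Lr = ∑' k, (ℓ k : ℝ) := by
    rw [hLrdef, hSdef, NNReal.coe_tsum]
  set s : ℕ → ℝ := fun k => ∑ j ∈ Finset.range k, (ℓ j : ℝ) with hsdef
  have hs0 : s 0 = 0 := by simp [hsdef]
  have hstep : ∀ k, s (k + 1) = s k + (ℓ k : ℝ) := fun k => Finset.sum_range_succ _ k
  have hsnn : ∀ k, 0 ≤ s k := fun k => Finset.sum_nonneg fun j _ => (ℓ j).coe_nonneg
  have hsmono : Monotone s := monotone_nat_of_le_succ fun k => by
    rw [hstep]; exact le_add_of_nonneg_right (ℓ k).coe_nonneg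
  have hsle : ∀ k, s k ≤ Lr := by
    intro k
    rw [hLr_eq]
    exact Summable.sum_le_tsum _ (fun j _ => (ℓ j).coe_nonneg) hsumR
  have hstend : Tendsto s atTop (nhds Lr) := by
    rw [hLr_eq]
    exact hsumR.hasSum.tendsto_sum_nat
  -- step bound
  have hedist_step : ∀ k, edist (v k) (v (k + 1)) ≤ ENNReal.ofReal (ℓ k : ℝ) := by
    intro k
    have h := (hlip k) (x := 0) ⟨le_refl _, (ℓ k).coe_nonneg⟩
      (y := ((ℓ k : ℝ))) ⟨(ℓ k).coe_nonneg, le_refl _⟩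
    rw [h0, h1] at h
    refine h.trans ?_
    rw [ENNReal.coe_one, one_mul, real_edist_eq]
    rw [abs_of_nonpos (by simp [(ℓ k).coe_nonneg])]
    simp
  -- chain bound
  have Hv : ∀ j k, j ≤ k → edist (v j) (v k) ≤ ENNReal.ofReal (s k - s j) := by
    intro j k hjk
    obtain ⟨m, rfl⟩ := Nat.exists_eq_add_of_le hjk
    clear hjk
    induction m with
    | zero => simp
    | succ m ih =>
      calc edist (v j) (v (j + (m + 1)))
          ≤ edist (v j) (v (j + m)) + edist (v (j + m)) (v (j + m + 1)) := by
            rw [show j + (m + 1) = j + m + 1 by ring]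
            exact edist_triangle _ _ _
        _ ≤ ENNReal.ofReal (s (j + m) - s j) + ENNReal.ofReal (ℓ (j + m) : ℝ) :=
            add_le_add ih (hedist_step _)
        _ ≤ ENNReal.ofReal (s (j + (m + 1)) - s j) := by
            rw [← ENNReal.ofReal_add (sub_nonneg.2 (hsmono (Nat.le_add_right j m)))
              (ℓ (j + m)).coe_nonneg]
            apply ENNReal.ofReal_le_ofReal
            rw [show j + (m + 1) = (j + m) + 1 by ring, hstep]
            linarith
  -- bound to the limit point
  have Hx : ∀ k, edist (v k) x ≤ ENNReal.ofReal (Lr - s k) := by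
    intro k
    have htend : Tendsto (fun m => edist (v k) (v m)) atTop (nhds (edist (v k) x)) :=
      tendsto_const_nhds.edist hv
    refine le_of_tendsto htend ?_
    filter_upwards [eventually_ge_atTop k] with m hm
    exact (Hv k m hm).trans (ENNReal.ofReal_le_ofReal (by linarith [hsle m]))
  -- the index function
  set J : ℝ → ℕ := fun t => sInf {k | t < s (k + 1)} with hJdef
  have hJne : ∀ t : ℝ, t < Lr → {k | t < s (k + 1)}.Nonempty := by
    intro t ht
    obtain ⟨k, hk⟩ := (hstend.eventually (eventually_gt_nhds ht)).exists
    exact ⟨k, lt_of_lt_of_le hk (hsmono (Nat.le_succ k))⟩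
  have hJ1 : ∀ t : ℝ, t < Lr → t < s (J t + 1) := fun t ht => Nat.sInf_mem (hJne t ht)
  have hJ0 : ∀ t : ℝ, 0 ≤ t → s (J t) ≤ t := by
    intro t ht0
    rcases h : J t with _ | m
    · rw [hs0]; exact ht0
    · have hm : m ∉ {k | t < s (k + 1)} :=
        Nat.notMem_of_lt_sInf (show m < J t by omega)
      simpa using not_lt.1 hm
  have hJmono : ∀ a b : ℝ, a ≤ b → b < Lr → J a ≤ J b := by
    intro a b hab hb
    exact Nat.sInf_le (lt_of_le_of_lt hab (hJ1 b hb))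
  -- the curve
  set Φ : ℝ → X := fun t => if h : t < Lr then φ (J t) (t - s (J t)) else x with hΦdef
  have hΦmem : ∀ t : ℝ, 0 ≤ t → t < Lr → t - s (J t) ∈ Icc (0 : ℝ) ((ℓ (J t) : ℝ)) := by
    intro t ht0 ht
    refine ⟨sub_nonneg.2 (hJ0 t ht0), ?_⟩
    have := hJ1 t ht
    rw [hstep] at this
    linarith
  have hΦeq : ∀ t : ℝ, t < Lr → Φ t = φ (J t) (t - s (J t)) := by
    intro t ht; rw [hΦdef]; exact dif_pos ht
  have hΦLr : ∀ t : ℝ, ¬ t < Lr → Φ t = x := by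
    intro t ht; rw [hΦdef]; exact dif_neg ht
  have HΦ1 : ∀ t : ℝ, 0 ≤ t → t < Lr →
      edist (Φ t) (v (J t)) ≤ ENNReal.ofReal (t - s (J t)) := by
    intro t ht0 ht
    rw [hΦeq t ht, ← h0 (J t)]
    have h := (hlip (J t)) (hΦmem t ht0 ht) (y := (0 : ℝ)) ⟨le_refl _, (ℓ (J t)).coe_nonneg⟩
    refine h.trans ?_
    rw [ENNReal.coe_one, one_mul, real_edist_eq, sub_zero,
      abs_of_nonneg (sub_nonneg.2 (hJ0 t ht0))]
  have HΦ2 : ∀ t : ℝ, 0 ≤ t → t < Lr →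
      edist (Φ t) (v (J t + 1)) ≤ ENNReal.ofReal (s (J t + 1) - t) := by
    intro t ht0 ht
    rw [hΦeq t ht, ← h1 (J t)]
    have h := (hlip (J t)) (hΦmem t ht0 ht)
      (y := ((ℓ (J t) : ℝ))) ⟨(ℓ (J t)).coe_nonneg, le_refl _⟩
    refine h.trans ?_
    rw [ENNReal.coe_one, one_mul, real_edist_eq]
    have hle : t - s (J t) - (ℓ (J t) : ℝ) ≤ 0 := by
      have := (hΦmem t ht0 ht).2; linarith
    rw [abs_of_nonpos hle]
    apply ENNReal.ofReal_le_ofReal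
    rw [hstep]; linarith
  -- the key Lipschitz estimate
  have key : ∀ a b : ℝ, a ∈ Icc (0 : ℝ) Lr → b ∈ Icc (0 : ℝ) Lr → a ≤ b →
      edist (Φ a) (Φ b) ≤ ENNReal.ofReal (b - a) := by
    intro a b ha hb hab
    by_cases hblt : b < Lr
    · have halt : a < Lr := lt_of_le_of_lt hab hblt
      have hjk : J a ≤ J b := hJmono a b hab hblt
      rcases eq_or_lt_of_le hjk with heq | hlt
      · -- same segment
        rw [hΦeq a halt, hΦeq b hblt, ← heq]
        have hbmem : b - s (J a) ∈ Icc (0 : ℝ) ((ℓ (J a) : ℝ)) := by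
          rw [heq]; exact hΦmem b hb.1 hblt
        have h := (hlip (J a)) (hΦmem a ha.1 halt) hbmem
        refine h.trans ?_
        rw [ENNReal.coe_one, one_mul, real_edist_eq]
        rw [show a - s (J a) - (b - s (J a)) = a - b by ring, abs_of_nonpos (by linarith),
          neg_sub]
      · -- different segments
        have T1 : edist (Φ a) (Φ b) ≤
            edist (Φ a) (v (J a + 1)) + edist (v (J a + 1)) (v (J b)) + edist (v (J b)) (Φ b) :=
          edist_triangle4 _ _ _ _
        have h1' : a ≤ s (J a + 1) := le_of_lt (hJ1 a halt)
        have h2' : s (J a + 1) ≤ s (J b) := hsmono hlt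
        have h3' : s (J b) ≤ b := hJ0 b hb.1
        have T2 : edist (v (J b)) (Φ b) ≤ ENNReal.ofReal (b - s (J b)) := by
          rw [edist_comm]; exact HΦ1 b hb.1 hblt
        have T3 : edist (Φ a) (Φ b) ≤ ENNReal.ofReal (s (J a + 1) - a) +
            ENNReal.ofReal (s (J b) - s (J a + 1)) + ENNReal.ofReal (b - s (J b)) :=
          T1.trans (add_le_add (add_le_add (HΦ2 a ha.1 halt) (Hv _ _ hlt)) T2)
        refine T3.trans ?_
        rw [← ENNReal.ofReal_add (by linarith) (by linarith),
          ← ENNReal.ofReal_add (by linarith) (by linarith)]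
        exact ENNReal.ofReal_le_ofReal (by linarith)
    · -- b = Lr
      have hbLr : b = Lr := le_antisymm hb.2 (not_lt.1 hblt)
      rw [hΦLr b hblt]
      by_cases halt : a < Lr
      · calc edist (Φ a) x
            ≤ edist (Φ a) (v (J a + 1)) + edist (v (J a + 1)) x := edist_triangle _ _ _
          _ ≤ ENNReal.ofReal (s (J a + 1) - a) + ENNReal.ofReal (Lr - s (J a + 1)) :=
              add_le_add (HΦ2 a ha.1 halt) (Hx _)
          _ ≤ ENNReal.ofReal (b - a) := by
              have h1' : a ≤ s (J a + 1) := le_of_lt (hJ1 a halt)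
              have h2' : s (J a + 1) ≤ Lr := hsle _
              rw [← ENNReal.ofReal_add (by linarith) (by linarith)]
              apply ENNReal.ofReal_le_ofReal
              linarith
      · rw [hΦLr a halt]
        simp
  -- endpoints
  have hΦ0 : Φ 0 = v 0 := by
    by_cases h : (0 : ℝ) < Lr
    · rw [hΦeq 0 h]
      have hs' : s (J 0) = 0 := le_antisymm (hJ0 0 le_rfl) (hsnn _)
      rw [hs', sub_zero, h0]
      have : edist (v 0) (v (J 0)) ≤ ENNReal.ofReal (s (J 0) - s 0) := Hv 0 (J 0) (Nat.zero_le _)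
      rw [hs0, hs', sub_zero, ENNReal.ofReal_zero, le_zero_iff] at this
      exact (edist_eq_zero.1 this).symm
    · rw [hΦLr 0 h]
      have hLr0 : Lr = 0 := le_antisymm (not_lt.1 h) S.coe_nonneg
      have : edist (v 0) x ≤ ENNReal.ofReal (Lr - s 0) := Hx 0
      rw [hs0, hLr0, sub_zero, ENNReal.ofReal_zero, le_zero_iff] at this
      exact (edist_eq_zero.1 this).symm
  have hΦend : Φ Lr = x := hΦLr Lr (lt_irrefl _)
  -- conclude
  have hts : ∑' k, (ℓ k : ℝ≥0∞) = (S : ℝ≥0∞) := (ENNReal.coe_tsum hsum).symm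
  rw [hts]
  apply sInf_le
  refine ⟨S, rfl, Φ, ?_, hΦ0, hΦend⟩
  intro a ha b hb
  rw [ENNReal.coe_one, one_mul, real_edist_eq]
  rcases le_total a b with h | h
  · rw [abs_of_nonpos (by linarith), neg_sub]
    exact key a b ha hb h
  · rw [abs_of_nonneg (by linarith), edist_comm]
    exact key b a hb ha h

/-- If `(X, d)` is a complete extended metric space then `(X, d_ℓ)` is complete as well:
every sequence that is Cauchy for the intrinsic metric `d_ℓ` converges with respect to `d_ℓ`. -/
theorem completeSpace_intrinsicEDist {X : Type*} [EMetricSpace X] [CompleteSpace X]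
    (u : ℕ → X)
    (hu : ∀ ε : ℝ≥0∞, 0 < ε → ∃ N : ℕ, ∀ m n : ℕ, N ≤ m → N ≤ n →
      intrinsicEDist (u m) (u n) < ε) :
    ∃ x : X, Filter.Tendsto (fun n => intrinsicEDist (u n) x) Filter.atTop (nhds 0) := by
  classical
  open Filter Set in
  -- the sequence is Cauchy for `d`
  have hcauchy : CauchySeq u := by
    rw [EMetric.cauchySeq_iff]
    intro ε hε
    obtain ⟨N, hN⟩ := hu ε hε
    exact ⟨N, fun m hm n hn =>
      lt_of_le_of_lt (edist_le_intrinsicEDist _ _) (hN m n hm hn)⟩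
  obtain ⟨x, hx⟩ := cauchySeq_tendsto_of_complete hcauchy
  refine ⟨x, ?_⟩
  rw [ENNReal.tendsto_nhds_zero]
  intro ε hε
  set δ : ℝ≥0∞ := min ε 1 with hδdef
  have hδpos : 0 < δ := lt_min hε zero_lt_one
  have hδtop : δ ≠ ⊤ := ne_top_of_le_ne_top one_ne_top (min_le_right _ _)
  have hδle : δ ≤ ε := min_le_left _ _
  -- thresholds
  have htpos : ∀ k : ℕ, 0 < δ * 2⁻¹ ^ (k + 1) := by
    intro k
    exact ENNReal.mul_pos hδpos.ne' (ENNReal.pow_pos (by norm_num) _).ne'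
  choose A hA using fun k => hu (δ * 2⁻¹ ^ (k + 1)) (htpos k)
  refine eventually_atTop.2 ⟨A 0, fun n hn => ?_⟩
  -- the subsequence
  set nk : ℕ → ℕ := fun k => Nat.rec n (fun k nk => max (nk + 1) (A (k + 1))) k with hnkdef
  have hnk0 : nk 0 = n := rfl
  have hnksucc : ∀ k, nk (k + 1) = max (nk k + 1) (A (k + 1)) := fun k => rfl
  have hge : ∀ k, A k ≤ nk k := by
    intro k
    cases k with
    | zero => exact hn
    | succ k => rw [hnksucc]; exact le_max_right _ _
  have hmono : ∀ k, nk k < nk (k + 1) := by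
    intro k; rw [hnksucc]; exact lt_of_lt_of_le (Nat.lt_succ_self _) (le_max_left _ _)
  have hd : ∀ k, intrinsicEDist (u (nk k)) (u (nk (k + 1))) < δ * 2⁻¹ ^ (k + 1) := by
    intro k
    exact hA k _ _ (hge k) (le_trans (hge k) (le_of_lt (hmono k)))
  -- choose curves
  have hcurve : ∀ k, ∃ (ℓ : ℝ≥0) (φ : ℝ → X), (ℓ : ℝ≥0∞) < δ * 2⁻¹ ^ (k + 1) ∧
      LipschitzOnWith 1 φ (Set.Icc 0 ((ℓ : ℝ))) ∧ φ 0 = u (nk k) ∧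
      φ ((ℓ : ℝ)) = u (nk (k + 1)) := by
    intro k
    obtain ⟨L, hLmem, hLlt⟩ := sInf_lt_iff.1 (hd k)
    obtain ⟨ℓ, rfl, φ, hlip, h0, h1⟩ := hLmem
    exact ⟨ℓ, φ, hLlt, hlip, h0, h1⟩
  choose ℓ φ hℓlt hlip hφ0 hφ1 using hcurve
  -- sum of lengths
  have htsum_le : ∑' k, (ℓ k : ℝ≥0∞) ≤ δ := by
    calc ∑' k, (ℓ k : ℝ≥0∞) ≤ ∑' k : ℕ, δ * 2⁻¹ ^ (k + 1) :=
          ENNReal.tsum_le_tsum fun k => (hℓlt k).le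
      _ = δ * 2⁻¹ * ∑' k : ℕ, (2⁻¹ : ℝ≥0∞) ^ k := by
          rw [← ENNReal.tsum_mul_left]
          congr 1; funext k; rw [pow_succ]; ring
      _ = δ := by
          rw [ENNReal.tsum_geometric]
          have h2 : (1 : ℝ≥0∞) - 2⁻¹ = 2⁻¹ := by
            rw [ENNReal.sub_eq_of_eq_add (by norm_num)]
            rw [← ENNReal.inv_two_add_inv_two]
          rw [h2]
          rw [inv_inv, mul_assoc, ENNReal.inv_mul_cancel (by norm_num) (by norm_num),
            mul_one]
  have hsummable : Summable ℓ := by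
    rw [← ENNReal.tsum_coe_ne_top_iff_summable]
    exact ne_top_of_le_ne_top hδtop htsum_le
  -- subsequence converges
  have hsub : Tendsto (fun k => u (nk k)) atTop (nhds x) :=
    hx.comp (strictMono_nat_of_lt_succ hmono).tendsto_atTop
  have hmain := intrinsicEDist_le_tsum (fun k => u (nk k)) x ℓ φ hlip hφ0 hφ1 hsummable hsub
  exact le_trans hmain (le_trans htsum_le hδle)
end

section
/- For an extended metric space (X,d) and points x,x' ∈ X, the intrinsic distance d_ℓ(x,x') equals the infimum, over all real numbers a ≤ b and all continuous maps f : [a,b] → X with f(a) = x and f(b) = x', of the length of f, where the length of f is the supremum over all partitions a = t_0 ≤ t_1 ≤ … ≤ t_{n+1} = b of Σ_{i=0}^{n} d(f(t_i), f(t_{i+1})) (i.e. the total variation eVariationOn f (Icc a b)). -/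
open ENNReal NNReal

open Set

section AuxiliaryLemmas

variable {E : Type*} [PseudoEMetricSpace E]

lemma eVariationOn_pair_le (f : ℝ → E) {x y : ℝ} (hxy : x ≤ y) :
    eVariationOn f ({x, y} : Set ℝ) ≤ edist (f x) (f y) := by
  rcases eq_top_or_lt_top (edist (f x) (f y)) with htop | hfin
  · exact htop ▸ le_top
  have hfinD : edist (f x) (f y) ≠ ⊤ := hfin.ne
  apply iSup_le
  rintro ⟨n, u, hu, us⟩
  rcases eq_or_lt_of_le hxy with rfl | hlt
  · have hux : ∀ i, u i = x := fun i => by rcases us i with h | h <;> simpa using h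
    simp [hux]
  · set D := edist (f x) (f y) with hD
    have key : ∀ i, u i = y → u (i + 1) = y := by
      intro i hi
      rcases us (i + 1) with h | h
      · exact absurd (h ▸ hu (Nat.le_succ i)) (by rw [hi]; exact not_le.mpr hlt)
      · exact h
    set v : ℕ → ℝ≥0∞ := fun i => if u i = y then D else 0 with hv
    have hvle : ∀ i, v i ≤ D := by intro i; dsimp only [v]; split_ifs <;> simp
    have hmono : Monotone v := by
      intro i j hij
      dsimp only [v]
      split_ifs with h1 h2 h2
      · exact le_rfl
      · exfalso
        apply h2
        clear h2
        induction hij with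
        | refl => exact h1
        | step h ih => exact key _ ih
      · exact zero_le
      · exact le_rfl
    have hterm : ∀ i, edist (f (u (i + 1))) (f (u i)) = v (i + 1) - v i := by
      intro i
      have hx1 : u i ≠ y → u i = x := fun h => by rcases us i with h' | h' <;> simp_all
      have hx2 : u (i + 1) ≠ y → u (i + 1) = x := fun h => by
        rcases us (i + 1) with h' | h' <;> simp_all
      by_cases h1 : u i = y
      · rw [show v i = D from if_pos h1, show v (i + 1) = D from if_pos (key i h1), h1,
          key i h1, edist_self, tsub_self]
      · by_cases h2 : u (i + 1) = y
        · rw [show v i = 0 from if_neg h1, show v (i + 1) = D from if_pos h2, hx1 h1, h2,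
            tsub_zero, edist_comm]
        · rw [show v i = 0 from if_neg h1, show v (i + 1) = 0 from if_neg h2, hx1 h1, hx2 h2,
            edist_self, tsub_self]
    have cancel : ∀ {p q r : ℝ≥0∞}, r ≤ q → q ≤ p → p ≠ ⊤ → (q - r) + (p - q) = p - r := by
      intro p q r h1 h2 hp
      have hr : r ≠ ⊤ := ne_top_of_le_ne_top hp (h1.trans h2)
      apply ENNReal.eq_sub_of_add_eq hr
      rw [add_comm (q - r), add_assoc, tsub_add_cancel_of_le h1, tsub_add_cancel_of_le h2]
    have tele : ∀ m : ℕ, ∑ i ∈ Finset.range m, (v (i + 1) - v i) = v m - v 0 := by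
      intro m
      induction m with
      | zero => simp
      | succ k ih =>
        rw [Finset.sum_range_succ, ih, cancel (hmono (Nat.zero_le k)) (hmono (Nat.le_succ k))
          (ne_top_of_le_ne_top hfinD (hvle (k + 1)))]
    calc (∑ i ∈ Finset.range n, edist (f (u (i + 1))) (f (u i)))
        = ∑ i ∈ Finset.range n, (v (i + 1) - v i) := Finset.sum_congr rfl fun i _ => hterm i
      _ = v n - v 0 := tele n
      _ ≤ v n := tsub_le_self
      _ ≤ D := hvle n

/-- Right smallness of variation for a continuous map of bounded variation. -/
lemma exists_right_variation_small (f : ℝ → E) {a b : ℝ}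
    (hf : ContinuousOn f (Icc a b)) (hbv : eVariationOn f (Icc a b) ≠ ⊤)
    {t0 : ℝ} (ht0 : t0 ∈ Ico a b) {ε : ℝ≥0∞} (hε : ε ≠ 0) :
    ∃ t1 ∈ Ioc t0 b, eVariationOn f (Icc t0 t1) ≤ ε := by
  set L : ℝ≥0∞ := ⨅ t1 ∈ Ioc t0 b, eVariationOn f (Icc t0 t1) with hLdef
  have hLb : L ≤ eVariationOn f (Icc t0 b) := biInf_le _ ⟨ht0.2, le_rfl⟩
  have hLtop : L ≠ ⊤ :=
    ne_top_of_le_ne_top hbv (hLb.trans (eVariationOn.mono f (Icc_subset_Icc ht0.1 le_rfl)))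
  have hL0 : L = 0 := by
    by_contra hL
    -- η := L / 8
    set η : ℝ≥0∞ := L / 8 with hη
    have hη0 : η ≠ 0 := by
      rw [hη]
      simp [ENNReal.div_eq_zero_iff, hL]
    have hηtop : η ≠ ⊤ := by
      rw [hη]
      exact (ENNReal.div_lt_top hLtop (by norm_num)).ne
    have hηL : η ≤ L := by
      rw [hη, ENNReal.div_le_iff_le_mul (Or.inl (by norm_num)) (Or.inl (by norm_num))]
      calc L = L * 1 := (mul_one L).symm
        _ ≤ L * 8 := mul_le_mul_right (by norm_num) L
    -- choose c₀ with variation < L + η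
    have h1 : L < L + η := ENNReal.lt_add_right hLtop hη0
    obtain ⟨c₀, hc₀, hc₀var⟩ : ∃ c₀ ∈ Ioc t0 b, eVariationOn f (Icc t0 c₀) < L + η := by
      have := hLdef ▸ h1
      rw [iInf_lt_iff] at this
      obtain ⟨c₀, hc⟩ := this
      rw [iInf_lt_iff] at hc
      obtain ⟨hc₀, h⟩ := hc
      exact ⟨c₀, hc₀, h⟩
    -- choose δ from continuity
    have hcont : ContinuousWithinAt f (Icc a b) t0 :=
      hf t0 ⟨ht0.1, ht0.2.le⟩
    have hmem : {u : ℝ | edist (f u) (f t0) < η} ∈ nhdsWithin t0 (Icc a b) :=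
      hcont (EMetric.ball_mem_nhds _ (pos_iff_ne_zero.2 hη0))
    rw [Metric.mem_nhdsWithin_iff] at hmem
    obtain ⟨δ, hδ, hball⟩ := hmem
    set c : ℝ := min c₀ (t0 + δ / 2) with hc
    have hct0 : t0 < c := lt_min hc₀.1 (by linarith)
    have hcb : c ≤ b := (min_le_left _ _).trans hc₀.2
    have hcc₀ : c ≤ c₀ := min_le_left _ _
    have hedist : ∀ u ∈ Icc t0 c, edist (f u) (f t0) < η := by
      intro u hu
      apply hball
      constructor
      · rw [Metric.mem_ball, Real.dist_eq, abs_of_nonneg (by linarith [hu.1])]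
        have : u ≤ t0 + δ / 2 := hu.2.trans (min_le_right _ _)
        linarith
      · exact ⟨ht0.1.trans hu.1, hu.2.trans hcb⟩
    set V : ℝ≥0∞ := eVariationOn f (Icc t0 c) with hV
    have hLV : L ≤ V := biInf_le _ ⟨hct0, hcb⟩
    have hVlt : V < L + η :=
      lt_of_le_of_lt (eVariationOn.mono f (Icc_subset_Icc le_rfl hcc₀)) hc₀var
    have hVtop : V ≠ ⊤ := ne_top_of_lt hVlt
    -- extract partition
    have hsub : V - η < V := ENNReal.sub_lt_self hVtop
      (fun h0 => hL (le_antisymm (h0 ▸ hLV) zero_le)) hη0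
    obtain ⟨⟨n, u, hu, us⟩, hsum⟩ :
        ∃ p : ℕ × { u : ℕ → ℝ // Monotone u ∧ ∀ i, u i ∈ Icc t0 c },
          V - η < ∑ i ∈ Finset.range p.1, edist (f (p.2.1 (i + 1))) (f (p.2.1 i)) := by
      rw [← lt_iSup_iff]
      exact hsub
    set S := ∑ i ∈ Finset.range n, edist (f (u (i + 1))) (f (u i)) with hS
    -- find first index with t0 < u i
    by_cases hex : ∃ i, t0 < u i
    · set m := Nat.find hex with hm
      have hum : t0 < u m := Nat.find_spec hex
      have humc : u m ≤ c := (us m).2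
      have humb : u m ≤ b := humc.trans hcb
      have hprev : ∀ i, i < m → u i = t0 := fun i hi =>
        le_antisymm (not_lt.mp (Nat.find_min hex hi)) (us i).1
      have hmemall : ∀ i, u i ∈ ({t0, u m} : Set ℝ) ∪ Icc (u m) c := by
        intro i
        rcases lt_or_ge i m with h | h
        · exact Or.inl (Or.inl (hprev i h))
        · exact Or.inr ⟨hu h, (us i).2⟩
      have hSle : S ≤ eVariationOn f (({t0, u m} : Set ℝ) ∪ Icc (u m) c) :=
        eVariationOn.sum_le (f := f) (n := n) hu hmemall
      have hsplit : eVariationOn f (({t0, u m} : Set ℝ) ∪ Icc (u m) c) =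
          eVariationOn f ({t0, u m} : Set ℝ) + eVariationOn f (Icc (u m) c) :=
        eVariationOn.union f
          ⟨Or.inr rfl, by rintro z (rfl | rfl); exacts [hum.le, le_rfl]⟩
          ⟨⟨le_rfl, humc⟩, fun z hz => hz.1⟩
      have hpair : eVariationOn f ({t0, u m} : Set ℝ) ≤ η :=
        (eVariationOn_pair_le f hum.le).trans
          ((edist_comm (f t0) (f (u m))) ▸ (hedist (u m) ⟨hum.le, humc⟩).le)
      -- variation split on interval
      have hIcc : eVariationOn f (Icc t0 (u m)) + eVariationOn f (Icc (u m) c) = V := by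
        have := eVariationOn.Icc_add_Icc f (a := t0) (b := u m) (c := c) hum.le humc
          (s := Icc t0 c) ⟨hum.le, humc⟩
        simpa [Set.inter_eq_self_of_subset_right (Icc_subset_Icc le_rfl humc),
          Set.inter_eq_self_of_subset_right (Icc_subset_Icc hum.le le_rfl),
          Set.inter_self] using this
      have hLum : L ≤ eVariationOn f (Icc t0 (u m)) := biInf_le _ ⟨hum, humb⟩
      have htail : eVariationOn f (Icc (u m) c) ≤ V - L := by
        apply ENNReal.le_sub_of_add_le_right hLtop
        calc eVariationOn f (Icc (u m) c) + L
            ≤ eVariationOn f (Icc (u m) c) + eVariationOn f (Icc t0 (u m)) :=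
              add_le_add_right hLum _
          _ = V := by rw [add_comm]; exact hIcc
      have hmain : V - η < η + (V - L) :=
        hsum.trans_le (hSle.trans (hsplit ▸ add_le_add hpair htail))
      have hVLtop : V - L ≠ ⊤ := ne_top_of_le_ne_top hVtop tsub_le_self
      have h2 : (V - η).toReal < (η + (V - L)).toReal :=
        (ENNReal.toReal_lt_toReal (ne_top_of_le_ne_top hVtop tsub_le_self)
          (ENNReal.add_ne_top.mpr ⟨hηtop, hVLtop⟩)).mpr hmain
      rw [ENNReal.toReal_sub_of_le (hηL.trans hLV) hVtop,
        ENNReal.toReal_add hηtop hVLtop,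
        ENNReal.toReal_sub_of_le hLV hVtop] at h2
      have her : η.toReal = L.toReal / 8 := by
        rw [hη, ENNReal.toReal_div]
        norm_num
      have hlr : 0 < L.toReal := ENNReal.toReal_pos hL hLtop
      rw [her] at h2
      linarith
    · -- all u i = t0, sum is zero
      push_neg at hex
      have : S = 0 := Finset.sum_eq_zero fun i _ => by
        have h1 : u i = t0 := le_antisymm (hex i) (us i).1
        have h2 : u (i + 1) = t0 := le_antisymm (hex (i + 1)) (us (i + 1)).1
        rw [h1, h2, edist_self]
      rw [this] at hsum
      exact absurd hsum (by simp)
  -- conclude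
  have : L < ε := hL0 ▸ pos_iff_ne_zero.2 hε
  rw [hLdef, iInf_lt_iff] at this
  obtain ⟨t1, h⟩ := this
  rw [iInf_lt_iff] at h
  obtain ⟨ht1, h⟩ := h
  exact ⟨t1, ht1, h.le⟩

/-- Left smallness of variation, by reflection. -/
lemma exists_left_variation_small (f : ℝ → E) {a b : ℝ}
    (hf : ContinuousOn f (Icc a b)) (hbv : eVariationOn f (Icc a b) ≠ ⊤)
    {t0 : ℝ} (ht0 : t0 ∈ Ioc a b) {ε : ℝ≥0∞} (hε : ε ≠ 0) :
    ∃ t1 ∈ Ico a t0, eVariationOn f (Icc t1 t0) ≤ ε := by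
  set r : ℝ → ℝ := fun t => a + b - t with hr
  have hranti : Antitone r := fun p q hpq => by simp only [hr]; linarith
  have himg : ∀ u v : ℝ, r '' Icc u v = Icc (a + b - v) (a + b - u) := fun u v =>
    Set.image_const_sub_Icc (a + b) u v
  set g : ℝ → E := f ∘ r with hg
  have hgvar : ∀ u v : ℝ, eVariationOn g (Icc u v) =
      eVariationOn f (Icc (a + b - v) (a + b - u)) := by
    intro u v
    rw [hg, eVariationOn.comp_eq_of_antitoneOn f r (hranti.antitoneOn _), himg]
  have hgcont : ContinuousOn g (Icc a b) := by
    apply hf.comp ((continuous_const.sub continuous_id).continuousOn)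
    intro t ht
    exact ⟨by simp; linarith [ht.2], by simp; linarith [ht.1]⟩
  have hgbv : eVariationOn g (Icc a b) ≠ ⊤ := by
    rw [hgvar a b]
    have e1 : a + b - b = a := by ring
    have e2 : a + b - a = b := by ring
    rw [e1, e2]
    exact hbv
  have hs0 : a + b - t0 ∈ Ico a b := ⟨by linarith [ht0.2], by linarith [ht0.1]⟩
  obtain ⟨s1, hs1, hvar⟩ := exists_right_variation_small g hgcont hgbv hs0 hε
  refine ⟨a + b - s1, ⟨by linarith [hs1.2], by linarith [hs1.1]⟩, ?_⟩
  have := hgvar (a + b - t0) s1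
  rw [show a + b - (a + b - t0) = t0 by ring] at this
  rw [← this]
  exact hvar

/-- The variation function is surjective onto `[0, total variation]`. -/
lemma variation_surjOn (f : ℝ → E) {a b : ℝ} (hab : a ≤ b)
    (hf : ContinuousOn f (Icc a b)) (hbv : eVariationOn f (Icc a b) ≠ ⊤) :
    Icc 0 (variationOnFromTo f (Icc a b) a b) ⊆
      variationOnFromTo f (Icc a b) a '' Icc a b := by
  set s : Set ℝ := Icc a b with hs
  have ha : a ∈ s := ⟨le_rfl, hab⟩
  have hb : b ∈ s := ⟨hab, le_rfl⟩
  have hbv' : BoundedVariationOn f s := hbv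
  have hlbv : LocallyBoundedVariationOn f s := hbv'.locallyBoundedVariationOn
  set v : ℝ → ℝ := variationOnFromTo f s a with hv
  have hva : v a = 0 := variationOnFromTo.self f s a
  have hmono : MonotoneOn v s := variationOnFromTo.monotoneOn hlbv ha
  have hdiff : ∀ {u w : ℝ}, u ∈ s → w ∈ s → u ≤ w →
      v w - v u = (eVariationOn f (Icc u w)).toReal := by
    intro u w hu hw huw
    have hadd := variationOnFromTo.add hlbv ha hu hw
    have heq : variationOnFromTo f s u w = (eVariationOn f (s ∩ Icc u w)).toReal :=
      variationOnFromTo.eq_of_le f s huw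
    rw [Set.inter_eq_self_of_subset_right (Icc_subset_Icc hu.1 hw.2)] at heq
    rw [← heq]
    linarith [hadd]
  rintro y ⟨hy0, hyb⟩
  set T : Set ℝ := {t | t ∈ s ∧ v t ≤ y} with hT
  have hTa : a ∈ T := ⟨ha, by rw [hva]; exact hy0⟩
  have hTne : T.Nonempty := ⟨a, hTa⟩
  have hTbdd : BddAbove T := ⟨b, fun t ht => ht.1.2⟩
  set c := sSup T with hc
  have hcs : c ∈ s := ⟨le_csSup hTbdd hTa, csSup_le hTne fun t ht => ht.1.2⟩
  refine ⟨c, hcs, ?_⟩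
  by_contra hne
  rcases lt_or_gt_of_ne hne with hlt | hgt
  · -- v c < y : use right smallness at c, c < b
    have hcb : c < b := lt_of_le_of_ne hcs.2 (by
      intro heq
      rw [heq] at hlt
      exact absurd hyb (not_le.mpr hlt))
    have hε : ENNReal.ofReal ((y - v c) / 2) ≠ 0 := by
      rw [ne_eq, ENNReal.ofReal_eq_zero, not_le]
      linarith
    obtain ⟨t1, ht1, hvar⟩ := exists_right_variation_small f hf hbv ⟨hcs.1, hcb⟩ hε
    have ht1s : t1 ∈ s := ⟨hcs.1.trans ht1.1.le, ht1.2⟩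
    have hd : v t1 - v c ≤ (y - v c) / 2 := by
      rw [hdiff hcs ht1s ht1.1.le]
      have := ENNReal.toReal_mono (by simp) hvar
      rwa [ENNReal.toReal_ofReal (by linarith)] at this
    have ht1T : t1 ∈ T := ⟨ht1s, by linarith⟩
    exact absurd (le_csSup hTbdd ht1T) (not_le.mpr ht1.1)
  · -- y < v c : use left smallness at c, a < c
    have hac : a < c := lt_of_le_of_ne hcs.1 (by
      intro heq
      rw [← heq, hva] at hgt
      exact absurd hgt (not_lt.mpr hy0))
    have hε : ENNReal.ofReal ((v c - y) / 2) ≠ 0 := by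
      rw [ne_eq, ENNReal.ofReal_eq_zero, not_le]
      linarith
    obtain ⟨t1, ht1, hvar⟩ := exists_left_variation_small f hf hbv ⟨hac, hcs.2⟩ hε
    have ht1s : t1 ∈ s := ⟨ht1.1, ht1.2.le.trans hcs.2⟩
    have hd : v c - v t1 ≤ (v c - y) / 2 := by
      rw [hdiff ht1s hcs ht1.2.le]
      have := ENNReal.toReal_mono (by simp) hvar
      rwa [ENNReal.toReal_ofReal (by linarith)] at this
    have ht1y : y < v t1 := by linarith
    obtain ⟨t, htT, htt1⟩ := exists_lt_of_lt_csSup hTne ht1.2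
    have : v t1 ≤ v t := hmono ht1s htT.1 htt1.le
    linarith [htT.2]

end AuxiliaryLemmas

/-- The intrinsic distance `d_ℓ(x, x')` equals the infimum, over all continuous curves
`f : [a, b] → X` from `x` to `x'`, of the length (total variation) of `f`. -/
theorem intrinsicEDist_eq_iInf_length {X : Type*} [EMetricSpace X] (x x' : X) :
    intrinsicEDist x x' =
      sInf {L : ℝ≥0∞ | ∃ (a b : ℝ) (f : ℝ → X), a ≤ b ∧
        ContinuousOn f (Set.Icc a b) ∧ f a = x ∧ f b = x' ∧
        L = eVariationOn f (Set.Icc a b)} := by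
  apply le_antisymm
  · apply le_sInf
    rintro L ⟨a, b, f, hab, hcont, hfa, hfb, rfl⟩
    by_cases htop : eVariationOn f (Icc a b) = ⊤
    · rw [htop]; exact le_top
    · set s : Set ℝ := Icc a b with hs
      have ha : a ∈ s := ⟨le_rfl, hab⟩
      have hb : b ∈ s := ⟨hab, le_rfl⟩
      have hbv : BoundedVariationOn f s := htop
      have hlbv : LocallyBoundedVariationOn f s := hbv.locallyBoundedVariationOn
      set ℓ : ℝ≥0 := (eVariationOn f s).toNNReal with hℓ
      set v : ℝ → ℝ := variationOnFromTo f s a with hv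
      have hvb : v b = (ℓ : ℝ) := by
        rw [hv, variationOnFromTo.eq_of_le f s hab, hs, Set.inter_self]
        rfl
      have hsurj : Icc (0 : ℝ) (ℓ : ℝ) ⊆ v '' s := by
        rw [← hvb]
        exact variation_surjOn f hab hcont htop
      set φ : ℝ → X := naturalParameterization f s a with hφ
      have hunit : HasUnitSpeedOn φ (v '' s) :=
        has_unit_speed_naturalParameterization f hlbv ha
      have hlip : LipschitzOnWith 1 φ (Icc 0 (ℓ : ℝ)) := by
        intro p hp q hq
        wlog hpq : p ≤ q generalizing p q
        · rw [edist_comm (φ p) (φ q), edist_comm p q]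
          exact this hq hp (le_of_not_ge hpq)
        have hp' : p ∈ v '' s := hsurj hp
        have hq' : q ∈ v '' s := hsurj hq
        calc edist (φ p) (φ q)
            ≤ eVariationOn φ ((v '' s) ∩ Icc p q) :=
              eVariationOn.edist_le φ ⟨hp', le_rfl, hpq⟩ ⟨hq', hpq, le_rfl⟩
          _ = ENNReal.ofReal (↑(1 : ℝ≥0) * (q - p)) := hunit hp' hq'
          _ ≤ ↑(1 : ℝ≥0) * edist p q := by
              rw [NNReal.coe_one, one_mul, ENNReal.coe_one, one_mul, edist_dist, Real.dist_eq]
              exact ENNReal.ofReal_le_ofReal ((le_abs_self _).trans (abs_sub_comm q p).le)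
      have h0 : φ 0 = x := by
        have h := edist_naturalParameterization_eq_zero hlbv ha ha
        rw [variationOnFromTo.self] at h
        rw [← hfa]
        exact edist_eq_zero.mp h
      have hend : φ (ℓ : ℝ) = x' := by
        have h := edist_naturalParameterization_eq_zero hlbv ha hb
        rw [show variationOnFromTo f s a b = v b from rfl, hvb] at h
        rw [← hfb]
        exact edist_eq_zero.mp h
      exact sInf_le ⟨ℓ, (ENNReal.coe_toNNReal htop).symm, φ, hlip, h0, hend⟩
  · apply le_sInf
    rintro L ⟨ℓ, rfl, φ, hφ, h0, hb⟩
    have hℓ0 : (0 : ℝ) ≤ (ℓ : ℝ) := ℓ.coe_nonneg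
    have hcont : ContinuousOn φ (Icc 0 (ℓ : ℝ)) := hφ.continuousOn
    have hvar : eVariationOn φ (Icc 0 (ℓ : ℝ)) ≤ (ℓ : ℝ≥0∞) := by
      have h1 : eVariationOn (φ ∘ id) (Icc 0 (ℓ : ℝ)) ≤
          1 * eVariationOn id (Icc 0 (ℓ : ℝ)) :=
        LipschitzOnWith.comp_eVariationOn_le hφ (mapsTo_id _)
      rw [Function.comp_id, one_mul] at h1
      refine h1.trans ?_
      have hmem0 : (0 : ℝ) ∈ Icc (0 : ℝ) (ℓ : ℝ) := ⟨le_rfl, hℓ0⟩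
      have hmemℓ : (ℓ : ℝ) ∈ Icc (0 : ℝ) (ℓ : ℝ) := ⟨hℓ0, le_rfl⟩
      have hmono : MonotoneOn (fun t : ℝ => t) (Icc 0 (ℓ : ℝ)) := fun u _ w _ huw => huw
      have h2 := hmono.eVariationOn_le hmem0 hmemℓ
      rw [Set.inter_self] at h2
      simpa [ENNReal.ofReal_coe_nnreal] using h2
    have hmem : eVariationOn φ (Icc 0 (ℓ : ℝ)) ∈ {L : ℝ≥0∞ | ∃ (a b : ℝ) (f : ℝ → X), a ≤ b ∧
        ContinuousOn f (Set.Icc a b) ∧ f a = x ∧ f b = x' ∧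
        L = eVariationOn f (Set.Icc a b)} := ⟨0, (ℓ : ℝ), φ, hℓ0, hcont, h0, hb, rfl⟩
    exact (sInf_le hmem).trans hvar
end

section
/- Let (X,d) be a complete extended metric space in which every closed ball of finite radius is compact. Then (X,d) is strictly intrinsic relative to d_ℓ: for any x,x' ∈ X with r := d_ℓ(x,x') < ∞ there exists a 1-Lipschitz map φ : [0,r] → (X,d) with φ(0) = x and φ(r) = x'. -/
open ENNReal NNReal
open Filter Topology

/-- If every finite-radius closed ball of the complete extended metric space `(X, d)` is
compact, then `(X, d)` is strictly intrinsic relative to `d_ℓ`: whenever `d_ℓ(x, x') = r < ∞`,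
there is a `1`-Lipschitz curve `[0, r] → (X, d)` from `x` to `x'`. -/
theorem strictly_intrinsic_of_compact_closedBalls {X : Type*} [EMetricSpace X] [CompleteSpace X]
    (hX : ∀ (x : X) (r : ℝ≥0), IsCompact (EMetric.closedBall x (r : ℝ≥0∞))) :
    ∀ (x x' : X) (r : ℝ≥0), intrinsicEDist x x' = (r : ℝ≥0∞) →
      ∃ φ : ℝ → X, LipschitzOnWith 1 φ (Set.Icc 0 (r : ℝ)) ∧ φ 0 = x ∧ φ (r : ℝ) = x' := by
  intro x x' r hr
  rw [intrinsicEDist] at hr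
  set S : Set ℝ≥0∞ := {L : ℝ≥0∞ | ∃ ℓ : ℝ≥0, L = (ℓ : ℝ≥0∞) ∧ ∃ φ : ℝ → X,
    LipschitzOnWith 1 φ (Set.Icc 0 (ℓ : ℝ)) ∧ φ 0 = x ∧ φ (ℓ : ℝ) = x'} with hS
  have hrS : sInf S = (r : ℝ≥0∞) := hr
  -- choose near-optimal curves
  have hex : ∀ n : ℕ, ∃ ℓ : ℝ≥0, r ≤ ℓ ∧ (ℓ : ℝ) < r + (n + 1 : ℝ)⁻¹ ∧
      ∃ φ : ℝ → X, LipschitzOnWith 1 φ (Set.Icc 0 (ℓ : ℝ)) ∧ φ 0 = x ∧ φ (ℓ : ℝ) = x' := by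
    intro n
    have hpos : (0 : ℝ≥0) < ((n : ℝ≥0) + 1)⁻¹ := by positivity
    have hlt : sInf S < (((r + ((n : ℝ≥0) + 1)⁻¹ : ℝ≥0)) : ℝ≥0∞) := by
      rw [hrS, ENNReal.coe_add]
      exact ENNReal.lt_add_right coe_ne_top (by exact_mod_cast hpos.ne')
    obtain ⟨L, hLS, hL⟩ := sInf_lt_iff.mp hlt
    obtain ⟨ℓ, rfl, φ, hφ⟩ := hLS
    have h1 : r ≤ ℓ := by
      have := sInf_le (show (ℓ : ℝ≥0∞) ∈ S from ⟨ℓ, rfl, φ, hφ⟩)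
      rw [hrS] at this
      exact_mod_cast this
    have h2 : (ℓ : ℝ) < r + (n + 1 : ℝ)⁻¹ := by
      rw [ENNReal.coe_lt_coe] at hL
      have := NNReal.coe_lt_coe.mpr hL
      push_cast at this ⊢
      linarith
    exact ⟨ℓ, h1, h2, φ, hφ⟩
  choose ℓ hrℓ hℓ φ hφ hφ0 hφℓ using hex
  have hsub : ∀ n, Set.Icc (0:ℝ) (r:ℝ) ⊆ Set.Icc 0 (ℓ n : ℝ) :=
    fun n => Set.Icc_subset_Icc le_rfl (by exact_mod_cast hrℓ n)
  -- ultrafilter extending atTop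
  let U : Ultrafilter ℕ := Ultrafilter.of atTop
  have hU : (U : Filter ℕ) ≤ atTop := Ultrafilter.of_le _
  -- values lie in a compact ball
  have hball : ∀ t ∈ Set.Icc (0:ℝ) (r:ℝ), ∀ n, φ n t ∈ EMetric.closedBall x (r : ℝ≥0∞) := by
    intro t ht n
    have h0 : (0:ℝ) ∈ Set.Icc 0 (ℓ n : ℝ) := ⟨le_rfl, (ℓ n).coe_nonneg⟩
    have hd := (hφ n) (hsub n ht) h0
    rw [hφ0 n] at hd
    refine EMetric.mem_closedBall.mpr (le_trans hd ?_)
    rw [ENNReal.coe_one, one_mul, edist_dist, Real.dist_eq, sub_zero, abs_of_nonneg ht.1]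
    calc ENNReal.ofReal t ≤ ENNReal.ofReal r := ENNReal.ofReal_le_ofReal ht.2
      _ = (r : ℝ≥0∞) := ENNReal.ofReal_coe_nnreal
  have key : ∀ t : ℝ, ∃ y, t ∈ Set.Icc (0:ℝ) (r:ℝ) →
      Tendsto (fun n => φ n t) (U : Filter ℕ) (𝓝 y) := by
    intro t
    by_cases ht : t ∈ Set.Icc (0:ℝ) (r:ℝ)
    · obtain ⟨y, _, hy⟩ := (hX x r).ultrafilter_le_nhds (U.map fun n => φ n t)
        (le_principal_iff.mpr (Filter.mem_map.mpr (Filter.univ_mem' (hball t ht))))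
      exact ⟨y, fun _ => hy⟩
    · exact ⟨x, fun h => absurd h ht⟩
  choose ψ hψ using key
  refine ⟨ψ, ?_, ?_, ?_⟩
  · -- Lipschitz
    intro s hs t ht
    have htend : Tendsto (fun n => edist (φ n s) (φ n t)) (U : Filter ℕ)
        (𝓝 (edist (ψ s) (ψ t))) := (hψ s hs).edist (hψ t ht)
    exact le_of_tendsto' htend fun n => (hφ n) (hsub n hs) (hsub n ht)
  · -- ψ 0 = x
    have h0 : (0:ℝ) ∈ Set.Icc (0:ℝ) (r:ℝ) := ⟨le_rfl, r.coe_nonneg⟩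
    have : Tendsto (fun n => φ n 0) (U : Filter ℕ) (𝓝 x) := by
      simp only [hφ0]; exact tendsto_const_nhds
    exact tendsto_nhds_unique (hψ 0 h0) this
  · -- ψ r = x'
    have hrm : (r:ℝ) ∈ Set.Icc (0:ℝ) (r:ℝ) := ⟨r.coe_nonneg, le_rfl⟩
    have hbound : ∀ n, edist (φ n (r:ℝ)) x' ≤ ENNReal.ofReal ((ℓ n : ℝ) - r) := by
      intro n
      have hr' : (r:ℝ) ∈ Set.Icc 0 (ℓ n : ℝ) := hsub n hrm
      have hl' : (ℓ n : ℝ) ∈ Set.Icc 0 (ℓ n : ℝ) := ⟨(ℓ n).coe_nonneg, le_rfl⟩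
      have hd := (hφ n) hr' hl'
      rw [hφℓ n] at hd
      refine le_trans hd ?_
      rw [ENNReal.coe_one, one_mul, edist_dist, Real.dist_eq,
        abs_of_nonpos (sub_nonpos.mpr (by exact_mod_cast hrℓ n)), neg_sub]
    have hup : Tendsto (fun n : ℕ => ENNReal.ofReal ((ℓ n : ℝ) - r)) atTop (𝓝 0) := by
      have hℓtend : Tendsto (fun n : ℕ => (ℓ n : ℝ) - r) atTop (𝓝 0) := by
        have hupper : Tendsto (fun n : ℕ => (n + 1 : ℝ)⁻¹) atTop (𝓝 0) := by
          exact tendsto_one_div_add_atTop_nhds_zero_nat.congr (fun n => by rw [one_div])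
        refine tendsto_of_tendsto_of_tendsto_of_le_of_le tendsto_const_nhds hupper
          (fun n => sub_nonneg.mpr (by exact_mod_cast hrℓ n)) (fun n => ?_)
        linarith [hℓ n]
      simpa using (ENNReal.tendsto_ofReal hℓtend)
    have hedist : Tendsto (fun n => edist (φ n (r:ℝ)) x') atTop (𝓝 0) :=
      tendsto_of_tendsto_of_tendsto_of_le_of_le tendsto_const_nhds hup
        (fun n => zero_le) hbound
    have htend : Tendsto (fun n => φ n (r:ℝ)) atTop (𝓝 x') := by
      rw [EMetric.tendsto_atTop]
      intro ε hε
      rcases eq_or_ne ε ⊤ with hε' | hε'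
      · obtain ⟨N, hN⟩ := (ENNReal.tendsto_atTop_zero.mp hedist) 1 one_pos
        exact ⟨N, fun n hn => lt_of_le_of_lt (hN n hn) (hε' ▸ ENNReal.one_lt_top)⟩
      · obtain ⟨N, hN⟩ := (ENNReal.tendsto_atTop_zero.mp hedist) (ε / 2)
          (ENNReal.half_pos hε.ne')
        exact ⟨N, fun n hn => lt_of_le_of_lt (hN n hn) (ENNReal.half_lt_self hε.ne' hε')⟩
    exact tendsto_nhds_unique (hψ (r:ℝ) hrm) (htend.mono_left hU)
end

section
/- For a complete extended metric space (X,d) the following are equivalent: (a) (X,d) is convex; (b) every pair of points x,x' with d(x,x') < ∞ is joined by a metric segment, i.e. an isometric map φ : [0,d(x,x')] → X with φ(0) = x and φ(d(x,x')) = x'; (c) every pair of points x,x' with d(x,x') < ∞ admits a midpoint, i.e. a point y with d(x,y) = d(x',y) = d(x,x')/2. -/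
open ENNReal NNReal Filter

private lemma myedist {s t : ℝ} (h : s ≤ t) : edist s t = ENNReal.ofReal (t - s) := by
  rw [edist_dist, Real.dist_eq, abs_of_nonpos (by linarith), neg_sub]

theorem segment_of_convex {X : Type*} [EMetricSpace X] [CompleteSpace X]
    (hconv : ∀ x y : X, x ≠ y → edist x y ≠ ⊤ →
        ∃ z : X, z ≠ x ∧ z ≠ y ∧ edist x y = edist x z + edist z y)
    (x x' : X) (hfin : edist x x' ≠ ⊤) :
    ∃ φ : ℝ → X,
      (∀ s ∈ Set.Icc (0 : ℝ) (edist x x').toReal,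
        ∀ t ∈ Set.Icc (0 : ℝ) (edist x x').toReal, edist (φ s) (φ t) = edist s t) ∧
      φ 0 = x ∧ φ (edist x x').toReal = x' := by
  classical
  set Dr := (edist x x').toReal with hDrdef
  have hDr0 : 0 ≤ Dr := ENNReal.toReal_nonneg
  set Good : Set (Set (ℝ × X)) :=
    {F | (0, x) ∈ F ∧ (Dr, x') ∈ F ∧ (∀ p ∈ F, p.1 ∈ Set.Icc 0 Dr) ∧
      ∀ p ∈ F, ∀ q ∈ F, edist p.2 q.2 = edist p.1 q.1} with hGooddef
  have hxx : edist x x' = edist (0 : ℝ) Dr := by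
    rw [myedist hDr0, sub_zero, ENNReal.ofReal_toReal hfin]
  -- base element
  have hF0 : ({(0, x), (Dr, x')} : Set (ℝ × X)) ∈ Good := by
    refine ⟨Set.mem_insert _ _, Set.mem_insert_of_mem _ rfl, ?_, ?_⟩
    · rintro p (rfl | rfl)
      · exact ⟨le_refl _, hDr0⟩
      · exact ⟨hDr0, le_refl _⟩
    · rintro p (rfl | rfl) q (rfl | rfl)
      · simp
      · exact hxx
      · show edist x' x = edist Dr (0 : ℝ)
        rw [edist_comm x' x, edist_comm Dr (0 : ℝ)]; exact hxx
      · simp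
  -- Zorn
  have hchaincond : ∀ c ⊆ Good, IsChain (· ⊆ ·) c → c.Nonempty →
      ∃ ub ∈ Good, ∀ s ∈ c, s ⊆ ub := by
    intro c hcG hchain hcne
    refine ⟨⋃₀ c, ?_, fun s hs => Set.subset_sUnion_of_mem hs⟩
    obtain ⟨F, hF⟩ := hcne
    refine ⟨Set.mem_sUnion.2 ⟨F, hF, (hcG hF).1⟩, Set.mem_sUnion.2 ⟨F, hF, (hcG hF).2.1⟩, ?_, ?_⟩
    · rintro p ⟨F', hF', hp⟩
      exact (hcG hF').2.2.1 p hp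
    · rintro p ⟨F1, hF1, hp⟩ q ⟨F2, hF2, hq⟩
      rcases hchain.total hF1 hF2 with h | h
      · exact (hcG hF2).2.2.2 p (h hp) q hq
      · exact (hcG hF1).2.2.2 p hp q (h hq)
  obtain ⟨M, hM0, hMmax⟩ := zorn_subset_nonempty Good hchaincond _ hF0
  obtain ⟨h0M, h1M, hsub, hiso⟩ := hMmax.prop
  -- the domain of the maximal partial isometry
  have hSsub : Prod.fst '' M ⊆ Set.Icc 0 Dr := by
    rintro _ ⟨q, hq, rfl⟩; exact hsub q hq
  -- Step A: the domain is closed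
  have hSclosed : IsClosed (Prod.fst '' M) := by
    apply isClosed_of_closure_subset
    intro g hg
    by_contra hgS
    obtain ⟨u, hu, hulim⟩ := mem_closure_iff_seq_limit.1 hg
    have hup : ∀ n, ∃ w : X, (u n, w) ∈ M := by
      intro n
      obtain ⟨q, hq, hq1⟩ := hu n
      exact ⟨q.2, by rw [← hq1, Prod.mk.eta]; exact hq⟩
    choose p hp using hup
    have hcu : CauchySeq u := hulim.cauchySeq
    have hcp : CauchySeq p := by
      rw [EMetric.cauchySeq_iff] at hcu ⊢
      intro ε hε
      obtain ⟨N, hN⟩ := hcu ε hε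
      refine ⟨N, fun m hm n hn => ?_⟩
      rw [hiso _ (hp m) _ (hp n)]
      exact hN m hm n hn
    obtain ⟨w, hw⟩ := cauchySeq_tendsto_of_complete hcp
    have hedist_lim : ∀ r ∈ M, edist w r.2 = edist g r.1 := by
      intro r hr
      have h1 : Tendsto (fun n => edist (p n) r.2) atTop (nhds (edist w r.2)) :=
        hw.edist tendsto_const_nhds
      have h2 : Tendsto (fun n => edist (u n) r.1) atTop (nhds (edist g r.1)) :=
        hulim.edist tendsto_const_nhds
      have heq : (fun n => edist (p n) r.2) = fun n => edist (u n) r.1 :=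
        funext fun n => hiso _ (hp n) _ hr
      rw [heq] at h1
      exact tendsto_nhds_unique h1 h2
    have hins : insert (g, w) M ∈ Good := by
      refine ⟨Set.mem_insert_of_mem _ h0M, Set.mem_insert_of_mem _ h1M, ?_, ?_⟩
      · rintro q (rfl | hq)
        · exact isClosed_Icc.mem_of_tendsto hulim
            (Filter.Eventually.of_forall fun n => hsub _ (hp n))
        · exact hsub q hq
      · rintro q (rfl | hq) r (rfl | hr)
        · simp
        · exact hedist_lim r hr
        · show edist q.2 w = edist q.1 g
          rw [edist_comm q.2 w, edist_comm q.1 g]; exact hedist_lim q hq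
        · exact hiso q hq r hr
    have hMsup : insert (g, w) M ⊆ M := hMmax.2 hins (Set.subset_insert _ _)
    exact hgS ⟨(g, w), hMsup (Set.mem_insert _ _), rfl⟩
  -- Step B: the domain is all of Icc 0 Dr
  have hScomplete : Set.Icc 0 Dr ⊆ Prod.fst '' M := by
    intro g hgI
    by_contra hgS
    -- sup of the domain below g
    have hne1 : (Prod.fst '' M ∩ Set.Icc 0 g).Nonempty :=
      ⟨0, ⟨(0, x), h0M, rfl⟩, le_refl 0, hgI.1⟩
    have hcpt1 : IsCompact (Prod.fst '' M ∩ Set.Icc 0 g) :=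
      isCompact_Icc.of_isClosed_subset (hSclosed.inter isClosed_Icc) Set.inter_subset_right
    set a := sSup (Prod.fst '' M ∩ Set.Icc 0 g) with hadef
    have ha : a ∈ Prod.fst '' M ∩ Set.Icc 0 g := hcpt1.sSup_mem hne1
    have hag : a < g := lt_of_le_of_ne ha.2.2 (fun h => hgS (h ▸ ha.1))
    -- inf of the domain above g
    have hne2 : (Prod.fst '' M ∩ Set.Icc g Dr).Nonempty :=
      ⟨Dr, ⟨(Dr, x'), h1M, rfl⟩, hgI.2, le_refl Dr⟩
    have hcpt2 : IsCompact (Prod.fst '' M ∩ Set.Icc g Dr) :=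
      isCompact_Icc.of_isClosed_subset (hSclosed.inter isClosed_Icc) Set.inter_subset_right
    set b := sInf (Prod.fst '' M ∩ Set.Icc g Dr) with hbdef
    have hb : b ∈ Prod.fst '' M ∩ Set.Icc g Dr := hcpt2.sInf_mem hne2
    have hgb : g < b := lt_of_le_of_ne hb.2.1 (fun h => hgS (h.symm ▸ hb.1))
    have hab : a < b := hag.trans hgb
    -- no domain points strictly between a and b
    have hgap : ∀ s ∈ Prod.fst '' M, a < s → b ≤ s := by
      intro s hs has
      rcases le_or_gt s g with hsg | hsg
      · exact absurd (le_csSup hcpt1.bddAbove ⟨hs, (hSsub hs).1, hsg⟩) (not_le.2 has)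
      · exact csInf_le hcpt2.bddBelow ⟨hs, hsg.le, (hSsub hs).2⟩
    -- the two endpoint points of the gap
    obtain ⟨qa, hqa, hqa1⟩ := ha.1
    obtain ⟨qb, hqb, hqb1⟩ := hb.1
    have hpq : edist qa.2 qb.2 = ENNReal.ofReal (b - a) := by
      rw [hiso qa hqa qb hqb, hqa1, hqb1, myedist hab.le]
    have hpqfin : edist qa.2 qb.2 ≠ ⊤ := by rw [hpq]; exact ENNReal.ofReal_ne_top
    have hpqne : qa.2 ≠ qb.2 := by
      intro h
      rw [h, edist_self] at hpq
      exact absurd hpq.symm (ne_of_gt (ENNReal.ofReal_pos.2 (by linarith)))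
    obtain ⟨z, hz1, hz2, hzsum⟩ := hconv qa.2 qb.2 hpqne hpqfin
    have he1fin : edist qa.2 z ≠ ⊤ := by
      intro h
      rw [hzsum, h] at hpqfin
      exact hpqfin (by simp)
    have he2fin : edist z qb.2 ≠ ⊤ := by
      intro h
      rw [hzsum, h] at hpqfin
      exact hpqfin (by simp)
    set δ := (edist qa.2 z).toReal with hδdef
    set δ' := (edist z qb.2).toReal with hδ'def
    have he1 : edist qa.2 z = ENNReal.ofReal δ := (ENNReal.ofReal_toReal he1fin).symm
    have he2 : edist z qb.2 = ENNReal.ofReal δ' := (ENNReal.ofReal_toReal he2fin).symm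
    have hδ0 : 0 < δ := ENNReal.toReal_pos (fun h => hz1 (edist_eq_zero.1 (edist_comm qa.2 z ▸ h)).symm) he1fin
    have hδ'0 : 0 < δ' := ENNReal.toReal_pos (fun h => hz2 (edist_eq_zero.1 h)) he2fin
    have hδsum : δ + δ' = b - a := by
      have := hzsum
      rw [hpq, he1, he2, ← ENNReal.ofReal_add hδ0.le hδ'0.le] at this
      have h2 := congrArg ENNReal.toReal this
      rw [ENNReal.toReal_ofReal (by linarith), ENNReal.toReal_ofReal (by linarith)] at h2
      linarith
    set c := a + δ with hcdef
    have hcb : c < b := by simp only [hcdef]; linarith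
    have hcS : c ∉ Prod.fst '' M := by
      intro hc
      exact absurd (hgap c hc (by simp only [hcdef]; linarith)) (not_le.2 hcb)
    have hzqb : edist z qb.2 = ENNReal.ofReal (b - c) := by
      rw [he2]; congr 1; simp only [hcdef]; linarith
    -- the extension is isometric
    have hznew : ∀ r ∈ M, edist z r.2 = edist c r.1 := by
      intro r hr
      have hr1 := hSsub ⟨r, hr, rfl⟩
      rcases le_or_gt r.1 a with hra | hra
      · have hgoal : edist c r.1 = ENNReal.ofReal (c - r.1) := by
          rw [edist_comm, myedist (by linarith : r.1 ≤ c)]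
        have har : edist qa.2 r.2 = ENNReal.ofReal (a - r.1) := by
          rw [hiso qa hqa r hr, hqa1, edist_comm, myedist hra]
        have hbr : edist qb.2 r.2 = ENNReal.ofReal (b - r.1) := by
          rw [hiso qb hqb r hr, hqb1, edist_comm, myedist (by linarith : r.1 ≤ b)]
        rw [hgoal]
        refine le_antisymm ?_ ?_
        · calc edist z r.2 ≤ edist z qa.2 + edist qa.2 r.2 := edist_triangle _ _ _
            _ = ENNReal.ofReal δ + ENNReal.ofReal (a - r.1) := by
                rw [edist_comm z qa.2, he1, har]
            _ = ENNReal.ofReal (c - r.1) := by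
                rw [← ENNReal.ofReal_add hδ0.le (by linarith)]
                congr 1
                simp only [hcdef]; ring
        · have htri : edist qb.2 r.2 ≤ edist qb.2 z + edist z r.2 := edist_triangle _ _ _
          rw [hbr, edist_comm qb.2 z, hzqb] at htri
          have h3 : ENNReal.ofReal (c - r.1) =
              ENNReal.ofReal (b - r.1) - ENNReal.ofReal (b - c) := by
            rw [← ENNReal.ofReal_sub _ (by linarith : (0:ℝ) ≤ b - c)]
            congr 1; ring
          rw [h3]
          exact tsub_le_iff_left.mpr htri
      · have hrb : b ≤ r.1 := hgap r.1 ⟨r, hr, rfl⟩ hra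
        have hgoal : edist c r.1 = ENNReal.ofReal (r.1 - c) :=
          myedist (by linarith : c ≤ r.1)
        have har : edist qa.2 r.2 = ENNReal.ofReal (r.1 - a) := by
          rw [hiso qa hqa r hr, hqa1, myedist (by linarith : a ≤ r.1)]
        have hbr : edist qb.2 r.2 = ENNReal.ofReal (r.1 - b) := by
          rw [hiso qb hqb r hr, hqb1, myedist hrb]
        rw [hgoal]
        refine le_antisymm ?_ ?_
        · calc edist z r.2 ≤ edist z qb.2 + edist qb.2 r.2 := edist_triangle _ _ _
            _ = ENNReal.ofReal (b - c) + ENNReal.ofReal (r.1 - b) := by rw [hzqb, hbr]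
            _ = ENNReal.ofReal (r.1 - c) := by
                rw [← ENNReal.ofReal_add (by linarith) (by linarith)]
                congr 1; ring
        · have htri : edist qa.2 r.2 ≤ edist qa.2 z + edist z r.2 := edist_triangle _ _ _
          rw [har, he1] at htri
          have h3 : ENNReal.ofReal (r.1 - c) =
              ENNReal.ofReal (r.1 - a) - ENNReal.ofReal δ := by
            rw [← ENNReal.ofReal_sub _ hδ0.le]
            congr 1
            simp only [hcdef]; ring
          rw [h3]
          exact tsub_le_iff_left.mpr htri
    -- extend M by (c, z): contradiction with maximality
    have hins : insert (c, z) M ∈ Good := by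
      refine ⟨Set.mem_insert_of_mem _ h0M, Set.mem_insert_of_mem _ h1M, ?_, ?_⟩
      · rintro q (rfl | hq)
        · have hbDr : b ≤ Dr := hb.2.2
          have ha0 : 0 ≤ a := ha.2.1
          exact ⟨by simp only [hcdef]; linarith, by simp only [hcdef]; linarith⟩
        · exact hsub q hq
      · rintro q (rfl | hq) r (rfl | hr)
        · simp
        · exact hznew r hr
        · show edist q.2 z = edist q.1 c
          rw [edist_comm q.2 z, edist_comm q.1 c]; exact hznew q hq
        · exact hiso q hq r hr
    have hMsup : insert (c, z) M ⊆ M := hMmax.2 hins (Set.subset_insert _ _)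
    exact hcS ⟨(c, z), hMsup (Set.mem_insert _ _), rfl⟩
  -- construct φ
  have hex : ∀ t ∈ Set.Icc (0:ℝ) Dr, ∃ w, (t, w) ∈ M := by
    intro t ht
    obtain ⟨q, hq, hq1⟩ := hScomplete ht
    exact ⟨q.2, by rw [← hq1, Prod.mk.eta]; exact hq⟩
  set φ : ℝ → X := fun t => if h : ∃ w, (t, w) ∈ M then h.choose else x with hφdef
  have hφmem : ∀ t ∈ Set.Icc (0:ℝ) Dr, (t, φ t) ∈ M := by
    intro t ht
    have h := hex t ht
    simp only [hφdef, dif_pos h]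
    exact h.choose_spec
  refine ⟨φ, ?_, ?_, ?_⟩
  · intro s hs t ht
    exact hiso _ (hφmem s hs) _ (hφmem t ht)
  · have h1 := hiso _ (hφmem 0 ⟨le_refl 0, hDr0⟩) _ h0M
    refine edist_eq_zero.1 ?_
    rw [show edist (φ 0) x = edist ((0:ℝ), φ 0).2 ((0:ℝ), x).2 from rfl, h1]
    simp
  · have h1 := hiso _ (hφmem Dr ⟨hDr0, le_refl Dr⟩) _ h1M
    refine edist_eq_zero.1 ?_
    rw [show edist (φ Dr) x' = edist ((Dr:ℝ), φ Dr).2 ((Dr:ℝ), x').2 from rfl, h1]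
    simp

private lemma mid_of_seg {X : Type*} [EMetricSpace X]
    (hseg : ∀ x x' : X, edist x x' ≠ ⊤ →
        ∃ φ : ℝ → X,
          (∀ s ∈ Set.Icc (0 : ℝ) (edist x x').toReal,
            ∀ t ∈ Set.Icc (0 : ℝ) (edist x x').toReal, edist (φ s) (φ t) = edist s t) ∧
          φ 0 = x ∧ φ (edist x x').toReal = x') :
    ∀ x x' : X, edist x x' ≠ ⊤ →
      ∃ y : X, edist x y = edist x x' / 2 ∧ edist x' y = edist x x' / 2 := by
  intro x x' hfin
  obtain ⟨φ, hiso, h0, h1⟩ := hseg x x' hfin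
  set Dr := (edist x x').toReal with hDrdef
  have hDr0 : 0 ≤ Dr := ENNReal.toReal_nonneg
  have hhalf : ENNReal.ofReal (Dr / 2) = edist x x' / 2 := by
    rw [ENNReal.ofReal_div_of_pos two_pos, ENNReal.ofReal_toReal hfin]
    norm_num
  have hmem : Dr / 2 ∈ Set.Icc (0:ℝ) Dr := ⟨by linarith, by linarith⟩
  refine ⟨φ (Dr / 2), ?_, ?_⟩
  · have h := hiso 0 ⟨le_refl 0, hDr0⟩ (Dr / 2) hmem
    rw [h0] at h
    rw [h, myedist (by linarith : (0:ℝ) ≤ Dr / 2), sub_zero, hhalf]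
  · have h := hiso Dr ⟨hDr0, le_refl Dr⟩ (Dr / 2) hmem
    rw [h1] at h
    rw [h, edist_comm, myedist (by linarith : Dr / 2 ≤ Dr),
      show Dr - Dr / 2 = Dr / 2 by ring, hhalf]

private lemma conv_of_mid {X : Type*} [EMetricSpace X]
    (hmid : ∀ x x' : X, edist x x' ≠ ⊤ →
      ∃ y : X, edist x y = edist x x' / 2 ∧ edist x' y = edist x x' / 2) :
    ∀ x y : X, x ≠ y → edist x y ≠ ⊤ →
      ∃ z : X, z ≠ x ∧ z ≠ y ∧ edist x y = edist x z + edist z y := by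
  intro x y hxy hfin
  obtain ⟨z, h1, h2⟩ := hmid x y hfin
  have hD0 : edist x y ≠ 0 := fun h => hxy (edist_eq_zero.1 h)
  have hhalf0 : edist x y / 2 ≠ 0 := by
    rw [Ne, ENNReal.div_eq_zero_iff]
    push_neg
    exact ⟨hD0, ENNReal.ofNat_ne_top⟩
  refine ⟨z, ?_, ?_, ?_⟩
  · intro h
    rw [h] at h1
    rw [edist_self] at h1
    exact hhalf0 h1.symm
  · intro h
    rw [h] at h2
    rw [edist_self] at h2
    exact hhalf0 h2.symm
  · rw [h1, edist_comm z y, h2, ENNReal.add_halves]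

/-- For a complete extended metric space `(X, d)` the following are equivalent:
(a) `X` is convex (every finite-distance pair of distinct points has a strictly intermediate
point); (b) every finite-distance pair of points is joined by a metric segment, i.e. an
isometric map `[0, d(x, x')] → X` with the prescribed endpoints; (c) every finite-distance
pair of points admits a midpoint. -/
theorem convex_iff_segments_iff_midpoints {X : Type*} [EMetricSpace X] [CompleteSpace X] :
    ((∀ x y : X, x ≠ y → edist x y ≠ ⊤ →
        ∃ z : X, z ≠ x ∧ z ≠ y ∧ edist x y = edist x z + edist z y) ↔
      (∀ x x' : X, edist x x' ≠ ⊤ →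
        ∃ φ : ℝ → X,
          (∀ s ∈ Set.Icc (0 : ℝ) (edist x x').toReal,
            ∀ t ∈ Set.Icc (0 : ℝ) (edist x x').toReal, edist (φ s) (φ t) = edist s t) ∧
          φ 0 = x ∧ φ (edist x x').toReal = x')) ∧
    ((∀ x x' : X, edist x x' ≠ ⊤ →
        ∃ φ : ℝ → X,
          (∀ s ∈ Set.Icc (0 : ℝ) (edist x x').toReal,
            ∀ t ∈ Set.Icc (0 : ℝ) (edist x x').toReal, edist (φ s) (φ t) = edist s t) ∧
          φ 0 = x ∧ φ (edist x x').toReal = x') ↔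
      (∀ x x' : X, edist x x' ≠ ⊤ →
        ∃ y : X, edist x y = edist x x' / 2 ∧ edist x' y = edist x x' / 2)) := by
  refine ⟨⟨fun h => segment_of_convex h, fun hB => conv_of_mid (mid_of_seg hB)⟩,
    ⟨mid_of_seg, fun hC => segment_of_convex (conv_of_mid hC)⟩⟩
end

section
/- Let 0 < C ≤ 1 and let j_i : Y → X_i (i ∈ I) be a family of nonexpansive, C-expansive maps between complete extended metric spaces, with gluing pseudodistance D on the disjoint union ⊔_i X_i. Then for every i ∈ I and all x,x' ∈ X_i one has D(ι_i x, ι_i x') ≥ C · d_{X_i}(x,x'); in particular each canonical map ι_i : X_i → ⊔_Y X_i into the glued space is C-expansive (and injective). -/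
open ENNReal NNReal

private lemma edist_sigma_congr' {I : Type*} {X : I → Type*} [∀ i, EMetricSpace (X i)]
    {i₁ i₂ : I} {a c : X i₁} {b d : X i₂}
    (h1 : (⟨i₁, a⟩ : Σ i, X i) = ⟨i₂, b⟩) (h2 : (⟨i₁, c⟩ : Σ i, X i) = ⟨i₂, d⟩) :
    edist a c = edist b d := by
  obtain ⟨rfl, h⟩ := Sigma.mk.inj_iff.mp h1
  rw [eq_of_heq h, eq_of_heq (Sigma.mk.inj_iff.mp h2).2]

private lemma sigma_map_congr' {I Y : Type*} {X : I → Type*} (j : ∀ i, Y → X i)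
    {i₁ i₂ : I} (h : i₁ = i₂) (z : Y) : (⟨i₁, j i₁ z⟩ : Σ i, X i) = ⟨i₂, j i₂ z⟩ := by
  subst h; rfl

/-- The gluing pseudodistance on the disjoint union `Σ i, X i` associated to a family of maps
`j i : Y → X i`: the infimum of `∑ s, d (p s) (q s)` over all finite chains
`p 0 = a, q 0, p 1, q 1, …, p n, q n = b` in which each pair `p s, q s` lies in a single
summand `X (idx s)` and consecutive points `q s`, `p (s+1)` are images of a common point of
`Y` under the corresponding `j`. -/
noncomputable def glueDist {I Y : Type*} {X : I → Type*} [∀ i, EMetricSpace (X i)]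
    (j : ∀ i, Y → X i) (a b : Σ i, X i) : ℝ≥0∞ :=
  sInf {L : ℝ≥0∞ | ∃ (n : ℕ) (idx : Fin (n + 1) → I) (p q : ∀ s, X (idx s)),
    (⟨idx 0, p 0⟩ : Σ i, X i) = a ∧ (⟨idx (Fin.last n), q (Fin.last n)⟩ : Σ i, X i) = b ∧
    (∀ s : Fin n, ∃ y : Y,
      q s.castSucc = j (idx s.castSucc) y ∧ p s.succ = j (idx s.succ) y) ∧
    L = ∑ s, edist (p s) (q s)}

/-- For a family of nonexpansive, `C`-expansive maps `j i : Y → X i` between complete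
extended metric spaces, the canonical maps `ι i : X i → ⊔_Y X i` into the glued space are
`C`-expansive, and in particular injective. -/
theorem glue_canonical_maps_expansive {I Y : Type*} {X : I → Type*}
    [EMetricSpace Y] [CompleteSpace Y]
    [∀ i, EMetricSpace (X i)] [∀ i, CompleteSpace (X i)]
    (C : ℝ≥0) (hC0 : 0 < C) (hC1 : C ≤ 1)
    (j : ∀ i, Y → X i)
    (hne : ∀ i, LipschitzWith 1 (j i))
    (hexp : ∀ (i : I) (y y' : Y), (C : ℝ≥0∞) * edist y y' ≤ edist (j i y) (j i y')) :
    ∀ (i : I) (x x' : X i),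
      (C : ℝ≥0∞) * edist x x' ≤ glueDist j ⟨i, x⟩ ⟨i, x'⟩ ∧
      (glueDist j ⟨i, x⟩ ⟨i, x'⟩ = 0 → x = x') := by
  intro i x x'
  have hC1' : (C : ℝ≥0∞) ≤ 1 := ENNReal.coe_le_one_iff.mpr hC1
  have key : (C : ℝ≥0∞) * edist x x' ≤ glueDist j ⟨i, x⟩ ⟨i, x'⟩ := by
    refine le_sInf ?_
    rintro L ⟨n, idx, p, q, h0, hlast, hchain, rfl⟩
    choose y hq hp using hchain
    classical
    set f : ℕ → X i := fun s =>
      if hs : 1 ≤ s ∧ s ≤ n then j i (y ⟨s - 1, by omega⟩) else if s = 0 then x else x'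
      with hf
    have hf0 : f 0 = x := by rw [hf]; norm_num
    have hfl : f (n + 1) = x' := by rw [hf]; norm_num
    have hmid : ∀ s (h1 : 1 ≤ s) (h2 : s ≤ n), f s = j i (y ⟨s - 1, by omega⟩) := by
      intro s h1 h2; rw [hf]; exact dif_pos ⟨h1, h2⟩
    have term : ∀ s : Fin (n + 1),
        (C : ℝ≥0∞) * edist (f s.val) (f (s.val + 1)) ≤ edist (p s) (q s) := by
      intro s
      by_cases hsn : s.val = n
      · -- last pair
        have hsl : s = Fin.last n := Fin.ext (by simpa using hsn)
        subst hsl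
        by_cases hn0 : n = 0
        · subst hn0
          have h00 : (Fin.last 0 : Fin 1) = 0 := Fin.ext (by simp)
          rw [h00] at hlast ⊢
          have hE : edist (p 0) (q 0) = edist x x' := edist_sigma_congr' h0 hlast
          rw [hE]
          show (C : ℝ≥0∞) * edist (f 0) (f (0 + 1)) ≤ edist x x'
          rw [hf0, hfl]  -- careful: hfl is f (n+1) with n = 0
          calc (C : ℝ≥0∞) * edist x x' ≤ 1 * edist x x' := mul_le_mul_left hC1' _
            _ = edist x x' := one_mul _
        · -- n > 0
          set t : Fin n := ⟨n - 1, by omega⟩ with ht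
          have hts : t.succ = Fin.last n := Fin.ext (by simp [ht]; omega)
          have hpl : p (Fin.last n) = j (idx (Fin.last n)) (y t) := by
            rw [← hts]; exact hp t
          have he : idx (Fin.last n) = i := (Sigma.mk.inj_iff.mp hlast).1
          have h1 : (⟨idx (Fin.last n), p (Fin.last n)⟩ : Σ i, X i) = ⟨i, j i (y t)⟩ := by
            rw [hpl]; exact sigma_map_congr' j he (y t)
          have hE : edist (p (Fin.last n)) (q (Fin.last n)) = edist (j i (y t)) x' :=
            edist_sigma_congr' h1 hlast
          rw [hE]
          have hv : (Fin.last n).val = n := rfl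
          rw [hv, hmid n (by omega) le_rfl, hfl]
          calc (C : ℝ≥0∞) * edist (j i (y ⟨n - 1, by omega⟩)) x'
              ≤ 1 * edist (j i (y t)) x' := mul_le_mul_left hC1' _
            _ = edist (j i (y t)) x' := one_mul _
      · -- s.val < n
        have hslt : s.val < n := by omega
        set t' : Fin n := ⟨s.val, hslt⟩ with ht'
        have hcs : t'.castSucc = s := Fin.ext rfl
        have hqs : q s = j (idx s) (y t') := by rw [← hcs]; exact hq t'
        have hfs1 : f (s.val + 1) = j i (y t') := by
          rw [hmid (s.val + 1) (by omega) (by omega)]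
          all_goals exact congrArg (fun z => j i (y z)) (Fin.ext (by simp [ht']))
        by_cases hs0 : s.val = 0
        · -- first pair
          have hs0' : s = 0 := Fin.ext hs0
          subst hs0'
          have he : idx 0 = i := (Sigma.mk.inj_iff.mp h0).1
          have h2 : (⟨idx 0, q 0⟩ : Σ i, X i) = ⟨i, j i (y t')⟩ := by
            rw [hqs]; exact sigma_map_congr' j he (y t')
          have hE : edist (p 0) (q 0) = edist x (j i (y t')) := edist_sigma_congr' h0 h2
          rw [hE]
          simp only [Fin.val_zero] at hfs1 ⊢
          rw [hf0, hfs1]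
          calc (C : ℝ≥0∞) * edist x (j i (y t')) ≤ 1 * edist x (j i (y t')) :=
                mul_le_mul_left hC1' _
            _ = edist x (j i (y t')) := one_mul _
        · -- middle pair
          set t : Fin n := ⟨s.val - 1, by omega⟩ with ht
          have hts : t.succ = s := Fin.ext (by simp [ht]; omega)
          have hps : p s = j (idx s) (y t) := by rw [← hts]; exact hp t
          have hfs : f s.val = j i (y t) := hmid s.val (by omega) (by omega)
          rw [hps, hqs, hfs, hfs1]
          calc (C : ℝ≥0∞) * edist (j i (y t)) (j i (y t'))
              ≤ (C : ℝ≥0∞) * edist (y t) (y t') := by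
                refine mul_le_mul_right ?_ _
                have := (hne i).edist_le_mul (y t) (y t')
                simpa using this
            _ ≤ edist (j (idx s) (y t)) (j (idx s) (y t')) := hexp (idx s) _ _
    calc (C : ℝ≥0∞) * edist x x'
        ≤ (C : ℝ≥0∞) * ∑ s ∈ Finset.range (n + 1), edist (f s) (f (s + 1)) := by
          refine mul_le_mul_right ?_ _
          rw [← hf0, ← hfl]
          exact edist_le_range_sum_edist f (n + 1)
      _ = ∑ s ∈ Finset.range (n + 1), (C : ℝ≥0∞) * edist (f s) (f (s + 1)) :=
          Finset.mul_sum _ _ _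
      _ = ∑ s : Fin (n + 1), (C : ℝ≥0∞) * edist (f s.val) (f (s.val + 1)) :=
          (Fin.sum_univ_eq_sum_range _ (n + 1)).symm
      _ ≤ ∑ s : Fin (n + 1), edist (p s) (q s) :=
          Finset.sum_le_sum fun s _ => term s
  refine ⟨key, fun h => ?_⟩
  have h0 : (C : ℝ≥0∞) * edist x x' = 0 := le_antisymm (h ▸ key) zero_le
  rcases mul_eq_zero.mp h0 with hC | hd
  · exact absurd hC (by exact_mod_cast hC0.ne')
  · exact eq_of_edist_eq_zero hd
end

section
/- Let 0 < C ≤ 1 and let j_i : Y → X_i (i ∈ I) be a family of nonexpansive, C-expansive maps between complete extended metric spaces, with gluing pseudodistance D on ⊔_i X_i. Then for i ≠ i' in I and points x ∈ X_i, x' ∈ X_{i'} one has D(ι_i x, ι_{i'} x') = inf_{y,y' ∈ Y} ( d_{X_i}(x, j_i y) + D(ι y, ι y') + d_{X_{i'}}(j_{i'} y', x') ). -/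
open ENNReal NNReal

/-- For a family of nonexpansive, `C`-expansive maps `j i : Y → X i` between complete
extended metric spaces and points `x ∈ X i`, `x' ∈ X i'` in distinct summands, the glued
distance is obtained by passing through the image of `Y` on both sides. -/
theorem glue_dist_across_summands {I Y : Type*} {X : I → Type*}
    [EMetricSpace Y] [CompleteSpace Y]
    [∀ i, EMetricSpace (X i)] [∀ i, CompleteSpace (X i)]
    (C : ℝ≥0) (hC0 : 0 < C) (hC1 : C ≤ 1)
    (j : ∀ i, Y → X i)
    (hne : ∀ i, LipschitzWith 1 (j i))
    (hexp : ∀ (i : I) (y y' : Y), (C : ℝ≥0∞) * edist y y' ≤ edist (j i y) (j i y')) :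
    ∀ (i i' : I), i ≠ i' → ∀ (x : X i) (x' : X i'),
      glueDist j ⟨i, x⟩ ⟨i', x'⟩ =
        ⨅ (y : Y) (y' : Y),
          edist x (j i y) + glueDist j ⟨i, j i y⟩ ⟨i', j i' y'⟩ + edist (j i' y') x' := by
  intro i i' hii' x x'
  refine le_antisymm (le_iInf fun y => le_iInf fun y' => ?_) (le_sInf ?_)
  · -- glueDist ≤ edist x (j i y) + glueDist' + edist (j i' y') x'
    have hrw : edist x (j i y) + glueDist j ⟨i, j i y⟩ ⟨i', j i' y'⟩ + edist (j i' y') x'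
        = ⨅ L : {L : ℝ≥0∞ | ∃ (n : ℕ) (idx : Fin (n + 1) → I) (p q : ∀ s, X (idx s)),
            (⟨idx 0, p 0⟩ : Σ i, X i) = ⟨i, j i y⟩ ∧
            (⟨idx (Fin.last n), q (Fin.last n)⟩ : Σ i, X i) = ⟨i', j i' y'⟩ ∧
            (∀ s : Fin n, ∃ z : Y,
              q s.castSucc = j (idx s.castSucc) z ∧ p s.succ = j (idx s.succ) z) ∧
            L = ∑ s, edist (p s) (q s)},
            (edist x (j i y) + (L : ℝ≥0∞) + edist (j i' y') x') := by
      rw [glueDist, sInf_eq_iInf', ENNReal.add_iInf, ENNReal.iInf_add]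
    rw [hrw]
    refine le_iInf fun ⟨L, hL⟩ => ?_
    obtain ⟨n, idx, p, q, h0, hlast, hlink, rfl⟩ := hL
    obtain ⟨rfl, hp0⟩ := Sigma.mk.inj_iff.mp h0
    obtain ⟨rfl, hql⟩ := Sigma.mk.inj_iff.mp hlast
    have hp0 : p 0 = j (idx 0) y := eq_of_heq hp0
    have hql : q (Fin.last n) = j (idx (Fin.last n)) y' := eq_of_heq hql
    refine le_trans (sInf_le ⟨n, idx, Function.update p 0 x,
      Function.update q (Fin.last n) x', by simp, by simp, fun s => ?_, rfl⟩) ?_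
    · obtain ⟨z, h1, h2⟩ := hlink s
      exact ⟨z, by rwa [Function.update_of_ne (Fin.castSucc_lt_last s).ne],
        by rwa [Function.update_of_ne (Fin.succ_ne_zero s)]⟩
    · have key : ∀ s : Fin (n + 1),
          edist (Function.update p 0 x s) (Function.update q (Fin.last n) x' s) ≤
          (if s = 0 then edist x (p 0) else 0) + edist (p s) (q s)
            + (if s = Fin.last n then edist (q (Fin.last n)) x' else 0) := by
        intro s
        by_cases hs0 : s = 0 <;> by_cases hsl : s = Fin.last n
        · exact absurd (congrArg idx (hs0 ▸ hsl)) hii'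
        · subst hs0
          simp only [Function.update_self, if_pos rfl, if_neg hsl,
            Function.update_of_ne hsl, add_zero]
          exact edist_triangle x (p 0) (q 0)
        · subst hsl
          simp only [Function.update_self, if_pos rfl, if_neg hs0,
            Function.update_of_ne hs0, zero_add]
          exact edist_triangle (p (Fin.last n)) (q (Fin.last n)) x'
        · simp [Function.update_of_ne hs0, Function.update_of_ne hsl, hs0, hsl]
      refine le_trans (Finset.sum_le_sum fun s _ => key s) ?_
      rw [Finset.sum_add_distrib, Finset.sum_add_distrib]
      simp [Finset.sum_ite_eq', hp0, hql]
  · -- every chain cost is ≥ the RHS infimum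
    rintro L ⟨n, idx, p, q, h0, hlast, hlink, rfl⟩
    obtain ⟨rfl, hp0⟩ := Sigma.mk.inj_iff.mp h0
    obtain ⟨rfl, hql⟩ := Sigma.mk.inj_iff.mp hlast
    obtain rfl : p 0 = x := eq_of_heq hp0
    obtain rfl : q (Fin.last n) = x' := eq_of_heq hql
    match n, idx, p, q, hii', hlink with
    | 0, idx, p, q, hii', hlink => exact absurd rfl hii'
    | (n + 1), idx, p, q, hii', hlink =>
      obtain ⟨y0, hy0a, hy0b⟩ := hlink 0
      obtain ⟨y1, hy1a, hy1b⟩ := hlink (Fin.last n)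
      rw [Fin.castSucc_zero] at hy0a
      rw [Fin.succ_last] at hy1b
      have h0l : (0 : Fin (n + 2)) ≠ Fin.last (n + 1) := by
        simp [Fin.ext_iff]
      refine le_trans (iInf₂_le y0 y1) ?_
      have hglue : glueDist j ⟨idx 0, j (idx 0) y0⟩
          ⟨idx (Fin.last (n + 1)), j (idx (Fin.last (n + 1))) y1⟩ ≤
          ∑ s, edist (Function.update p 0 (j (idx 0) y0) s)
            (Function.update q (Fin.last (n + 1)) (j (idx (Fin.last (n + 1))) y1) s) := by
        refine sInf_le ⟨n + 1, idx, _, _, by simp, by simp, fun s => ?_, rfl⟩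
        obtain ⟨z, h1, h2⟩ := hlink s
        exact ⟨z, by rwa [Function.update_of_ne (Fin.castSucc_lt_last s).ne],
          by rwa [Function.update_of_ne (Fin.succ_ne_zero s)]⟩
      refine le_trans (add_le_add (add_le_add le_rfl hglue) le_rfl) ?_
      rw [← hy0a, ← hy1b]
      have key : ∀ s : Fin (n + 2),
          (if s = 0 then edist (p 0) (q 0) else 0)
            + edist (Function.update p 0 (q 0) s)
                (Function.update q (Fin.last (n + 1)) (p (Fin.last (n + 1))) s)
            + (if s = Fin.last (n + 1) then
                edist (p (Fin.last (n + 1))) (q (Fin.last (n + 1))) else 0)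
            ≤ edist (p s) (q s) := by
        intro s
        by_cases hs0 : s = 0 <;> by_cases hsl : s = Fin.last (n + 1)
        · exact absurd (hs0 ▸ hsl) h0l
        · subst hs0
          simp [Function.update_self, Function.update_of_ne h0l, hsl]
        · subst hsl
          simp [Function.update_self, Function.update_of_ne (Ne.symm h0l), hs0]
        · simp [Function.update_of_ne hs0, Function.update_of_ne hsl, hs0, hsl]
      calc edist (p 0) (q 0)
            + (∑ s, edist (Function.update p 0 (q 0) s)
               (Function.update q (Fin.last (n + 1)) (p (Fin.last (n + 1))) s))
            + edist (p (Fin.last (n + 1))) (q (Fin.last (n + 1)))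
          = ∑ s : Fin (n + 2), ((if s = 0 then edist (p 0) (q 0) else 0)
              + edist (Function.update p 0 (q 0) s)
                  (Function.update q (Fin.last (n + 1)) (p (Fin.last (n + 1))) s)
              + (if s = Fin.last (n + 1) then
                  edist (p (Fin.last (n + 1))) (q (Fin.last (n + 1))) else 0)) := by
            rw [Finset.sum_add_distrib, Finset.sum_add_distrib]
            simp [Finset.sum_ite_eq']
        _ ≤ ∑ s, edist (p s) (q s) := Finset.sum_le_sum fun s _ => key s
end

section
/- Let 0 < C ≤ 1 and let j_i : Y → X_i (i ∈ I) be a family of nonexpansive, C-expansive maps between complete extended metric spaces. Then the glued space ⊔_Y X_i (the metric quotient of the disjoint union under the gluing pseudodistance D) is a complete extended metric space. -/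
open ENNReal NNReal

section
variable {I Y : Type*} {X : I → Type*} [∀ i, EMetricSpace (X i)] (j : ∀ i, Y → X i)

inductive GChain : (Σ i, X i) → (Σ i, X i) → ℝ≥0∞ → Prop
  | single (i : I) (x x' : X i) : GChain ⟨i, x⟩ ⟨i, x'⟩ (edist x x')
  | cons (i : I) (x : X i) (y : Y) {i' : I} {b : Σ i, X i} {L : ℝ≥0∞}
      (h : GChain ⟨i', j i' y⟩ b L) : GChain ⟨i, x⟩ b (edist x (j i y) + L)

variable {j}

theorem gchain_of_chain : ∀ (n : ℕ) (idx : Fin (n + 1) → I) (p q : ∀ s, X (idx s)),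
    (∀ s : Fin n, ∃ y : Y,
      q s.castSucc = j (idx s.castSucc) y ∧ p s.succ = j (idx s.succ) y) →
    GChain j ⟨idx 0, p 0⟩ ⟨idx (Fin.last n), q (Fin.last n)⟩ (∑ s, edist (p s) (q s)) := by
  intro n
  induction n with
  | zero =>
    intro idx p q _
    rw [Fin.sum_univ_one]
    exact GChain.single _ _ _
  | succ n ih =>
    intro idx p q hlink
    have tail := ih (fun t => idx t.succ) (fun t => p t.succ) (fun t => q t.succ)
      (fun t => by
        obtain ⟨y, hy1, hy2⟩ := hlink t.succ
        exact ⟨y, hy1, hy2⟩)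
    obtain ⟨y, hy1, hy2⟩ := hlink 0
    rw [Fin.sum_univ_succ]
    have h0 : (0 : Fin (n+1)).castSucc = (0 : Fin (n+2)) := rfl
    rw [h0] at hy1
    rw [hy1]
    rw [show Fin.last (n+1) = (Fin.last n).succ from rfl]
    have tail' : GChain j ⟨idx (Fin.succ 0), j (idx (Fin.succ 0)) y⟩
        ⟨idx (Fin.last n).succ, q (Fin.last n).succ⟩
        (∑ i : Fin (n+1), edist (p i.succ) (q i.succ)) := by
      rw [← hy2]; exact tail
    exact GChain.cons (idx 0) (p 0) y tail'

theorem chain_of_gchain {a b : Σ i, X i} {L : ℝ≥0∞} (h : GChain j a b L) :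
    ∃ (n : ℕ) (idx : Fin (n + 1) → I) (p q : ∀ s, X (idx s)),
    (⟨idx 0, p 0⟩ : Σ i, X i) = a ∧ (⟨idx (Fin.last n), q (Fin.last n)⟩ : Σ i, X i) = b ∧
    (∀ s : Fin n, ∃ y : Y,
      q s.castSucc = j (idx s.castSucc) y ∧ p s.succ = j (idx s.succ) y) ∧
    L = ∑ s, edist (p s) (q s) := by
  induction h with
  | single i x x' =>
    refine ⟨0, fun _ => i, fun _ => x, fun _ => x', rfl, rfl, fun s => s.elim0, ?_⟩
    rw [Fin.sum_univ_one]
  | @cons i x y i' b L h ih =>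
    obtain ⟨n, idx, p, q, h1, h2, hlink, hsum⟩ := ih
    obtain ⟨hi0, hp0⟩ := Sigma.mk.inj_iff.mp h1
    have hp0' : p 0 = j (idx 0) y := by
      subst hi0; exact eq_of_heq hp0
    refine ⟨n + 1, Fin.cases (motive := fun _ => I) i idx,
      Fin.cases (motive := fun s => X (Fin.cases (motive := fun _ => I) i idx s)) x p,
      Fin.cases (motive := fun s => X (Fin.cases (motive := fun _ => I) i idx s)) (j i y) q,
      rfl, ?_, ?_, ?_⟩
    · show (⟨idx (Fin.last n), q (Fin.last n)⟩ : Σ i, X i) = b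
      exact h2
    · intro s
      induction s using Fin.cases with
      | zero => exact ⟨y, rfl, hp0'⟩
      | succ t =>
        obtain ⟨y', hy1, hy2⟩ := hlink t
        exact ⟨y', hy1, hy2⟩
    · rw [Fin.sum_univ_succ]
      simp only [Fin.cases_zero, Fin.cases_succ]
      rw [hsum]
      rfl


theorem GChain.snoc_aux {a c : Σ i, X i} {L : ℝ≥0∞} (h : GChain j a c L) :
    ∀ (i' : I) (y : Y), c = ⟨i', j i' y⟩ → ∀ (i : I) (x : X i),
      GChain j a ⟨i, x⟩ (L + edist (j i y) x) := by
  induction h with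
  | single i₀ x₀ x₀' =>
    intro i' y hc i x
    obtain ⟨rfl, hx⟩ := Sigma.mk.inj_iff.mp hc
    obtain rfl := eq_of_heq hx
    exact GChain.cons i₀ x₀ y (GChain.single i (j i y) x)
  | @cons i₁ x₁ y₁ i₂ c' L' h ih =>
    intro i' y hc i x
    rw [add_assoc]
    exact GChain.cons i₁ x₁ y₁ (ih i' y hc i x)

theorem GChain.snoc {a : Σ i, X i} {i' : I} {y : Y} {L : ℝ≥0∞}
    (h : GChain j a ⟨i', j i' y⟩ L) (i : I) (x : X i) :
    GChain j a ⟨i, x⟩ (L + edist (j i y) x) :=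
  h.snoc_aux i' y rfl i x

theorem GChain.symm {a b : Σ i, X i} {L : ℝ≥0∞} (h : GChain j a b L) :
    GChain j b a L := by
  induction h with
  | single i x x' => rw [edist_comm]; exact GChain.single i x' x
  | @cons i x y i' b L h ih =>
    rw [add_comm, ← edist_comm (j i y) x]
    exact ih.snoc i x

theorem GChain.front_aux {c b : Σ i, X i} {L : ℝ≥0∞} (h : GChain j c b L) :
    ∀ (i : I) (x : X i), c = ⟨i, x⟩ → ∀ (x₀ : X i),
      ∃ L', GChain j ⟨i, x₀⟩ b L' ∧ L' ≤ edist x₀ x + L := by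
  cases h with
  | single i₁ x₁ x₁' =>
    intro i x hc x₀
    obtain ⟨rfl, hx⟩ := Sigma.mk.inj_iff.mp hc
    obtain rfl := eq_of_heq hx
    exact ⟨edist x₀ x₁', GChain.single i₁ x₀ x₁', edist_triangle _ _ _⟩
  | @cons i₁ x₁ y i₂ b' L' h =>
    intro i x hc x₀
    obtain ⟨rfl, hx⟩ := Sigma.mk.inj_iff.mp hc
    obtain rfl := eq_of_heq hx
    refine ⟨edist x₀ (j i₁ y) + L', GChain.cons i₁ x₀ y h, ?_⟩
    rw [← add_assoc]
    exact add_le_add_left (edist_triangle _ _ _) _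

theorem GChain.glue_aux {a c : Σ i, X i} {L₁ : ℝ≥0∞} (h₁ : GChain j a c L₁) :
    ∀ (i : I) (x : X i), c = ⟨i, x⟩ → ∀ {b : Σ i, X i} {L₂ : ℝ≥0∞},
      GChain j ⟨i, x⟩ b L₂ → ∃ L, GChain j a b L ∧ L ≤ L₁ + L₂ := by
  induction h₁ with
  | single i₁ x₁ x₁' =>
    intro i x hc b L₂ h₂
    obtain ⟨rfl, hx⟩ := Sigma.mk.inj_iff.mp hc
    obtain rfl := eq_of_heq hx
    exact h₂.front_aux i₁ x₁' rfl x₁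
  | @cons i₁ x₁ y₁ i₂ c' L' h ih =>
    intro i x hc b L₂ h₂
    obtain ⟨L, hL, hle⟩ := ih i x hc h₂
    refine ⟨edist x₁ (j i₁ y₁) + L, GChain.cons i₁ x₁ y₁ hL, ?_⟩
    rw [add_assoc]
    exact add_le_add_right hle _

theorem GChain.glue {a b : Σ i, X i} {i : I} {x : X i} {L₁ L₂ : ℝ≥0∞}
    (h₁ : GChain j a ⟨i, x⟩ L₁) (h₂ : GChain j ⟨i, x⟩ b L₂) :
    ∃ L, GChain j a b L ∧ L ≤ L₁ + L₂ :=
  h₁.glue_aux i x rfl h₂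

theorem glueDist_eq (a b : Σ i, X i) :
    glueDist j a b = sInf {L | GChain j a b L} := by
  unfold glueDist
  congr 1
  ext L
  constructor
  · rintro ⟨n, idx, p, q, h1, h2, hlink, rfl⟩
    have := gchain_of_chain n idx p q hlink
    rwa [h1, h2] at this
  · intro h
    exact chain_of_gchain h


variable (j) in
theorem glueDist_le_edist (i : I) (x x' : X i) :
    glueDist j ⟨i, x⟩ ⟨i, x'⟩ ≤ edist x x' := by
  rw [glueDist_eq]
  exact sInf_le (GChain.single i x x')

variable (j) in
theorem glueDist_comm (a b : Σ i, X i) : glueDist j a b = glueDist j b a := by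
  rw [glueDist_eq, glueDist_eq]
  congr 1
  ext L
  exact ⟨GChain.symm, GChain.symm⟩

variable (j) in
theorem glueDist_triangle (a b c : Σ i, X i) :
    glueDist j a c ≤ glueDist j a b + glueDist j b c := by
  obtain ⟨i, xb⟩ := b
  rw [glueDist_eq a ⟨i, xb⟩, glueDist_eq ⟨i, xb⟩ c, glueDist_eq a c]
  rw [ENNReal.sInf_add]
  refine le_iInf₂ fun L₁ h₁ => ?_
  rw [add_comm, ENNReal.sInf_add]
  refine le_iInf₂ fun L₂ h₂ => ?_
  obtain ⟨L, hL, hle⟩ := GChain.glue h₁ h₂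
  exact le_trans (sInf_le hL) (hle.trans (le_of_eq (add_comm _ _)))

variable (j) in
theorem glueDist_cross (i i' : I) (y : Y) :
    glueDist j ⟨i, j i y⟩ ⟨i', j i' y⟩ = 0 := by
  refine le_antisymm ?_ zero_le
  rw [glueDist_eq]
  have h := GChain.cons i (j i y) y (GChain.single i' (j i' y) (j i' y))
  have h0 : edist (j i y) (j i y) + edist (j i' y) (j i' y) = 0 := by simp
  exact le_of_le_of_eq (sInf_le h) h0

theorem gchain_lower [EMetricSpace Y] {C : ℝ≥0}
    (hexp : ∀ (i : I) (y y' : Y), (C : ℝ≥0∞) * edist y y' ≤ edist (j i y) (j i y'))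
    {a b : Σ i, X i} {L : ℝ≥0∞} (h : GChain j a b L) :
    ∀ (i : I) (y : Y) (i' : I) (y' : Y), a = ⟨i, j i y⟩ → b = ⟨i', j i' y'⟩ →
      (C : ℝ≥0∞) * edist y y' ≤ L := by
  induction h with
  | single i₀ x₀ x₀' =>
    intro i y i' y' ha hb
    obtain ⟨rfl, hx⟩ := Sigma.mk.inj_iff.mp ha
    obtain rfl := eq_of_heq hx
    obtain ⟨rfl, hx'⟩ := Sigma.mk.inj_iff.mp hb
    obtain rfl := eq_of_heq hx'
    exact hexp i₀ y y'
  | @cons i₁ x₁ y₁ i₂ b' L' h ih =>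
    intro i y i' y' ha hb
    obtain ⟨rfl, hx⟩ := Sigma.mk.inj_iff.mp ha
    obtain rfl := eq_of_heq hx
    calc (C : ℝ≥0∞) * edist y y'
        ≤ (C : ℝ≥0∞) * (edist y y₁ + edist y₁ y') :=
          mul_le_mul_right (edist_triangle _ _ _) _
      _ = (C : ℝ≥0∞) * edist y y₁ + (C : ℝ≥0∞) * edist y₁ y' := mul_add _ _ _
      _ ≤ edist (j i₁ y) (j i₁ y₁) + L' :=
          add_le_add (hexp i₁ y y₁) (ih i₂ y₁ i' y' rfl hb)

theorem glueDist_lower [EMetricSpace Y] {C : ℝ≥0}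
    (hexp : ∀ (i : I) (y y' : Y), (C : ℝ≥0∞) * edist y y' ≤ edist (j i y) (j i y'))
    (i : I) (y : Y) (i' : I) (y' : Y) :
    (C : ℝ≥0∞) * edist y y' ≤ glueDist j ⟨i, j i y⟩ ⟨i', j i' y'⟩ := by
  rw [glueDist_eq]
  exact le_sInf fun L hL => gchain_lower hexp hL i y i' y' rfl rfl

theorem gchain_dichotomy {a b : Σ i, X i} {L : ℝ≥0∞} (h : GChain j a b L) :
    (∃ (i : I) (x x' : X i), a = ⟨i, x⟩ ∧ b = ⟨i, x'⟩ ∧ edist x x' ≤ L) ∨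
    (∃ (i' : I) (y : Y), glueDist j a ⟨i', j i' y⟩ ≤ L) := by
  cases h with
  | single i x x' => exact Or.inl ⟨i, x, x', rfl, rfl, le_refl _⟩
  | @cons i x y i' b' L' h =>
    exact Or.inr ⟨i, y, (glueDist_le_edist j i x (j i y)).trans le_self_add⟩

omit [∀ i, EMetricSpace (X i)] in
theorem sigma_cast {i : I} {s : Σ i, X i} (h : s.1 = i) :
    s = ⟨i, cast (congrArg X h) s.2⟩ := by
  cases s
  subst h
  rfl

end

/-- The glued space of a family of nonexpansive, `C`-expansive maps `j i : Y → X i` between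
complete extended metric spaces is complete: every sequence in the disjoint union that is
Cauchy for the gluing pseudodistance converges (in the gluing pseudodistance) to some point;
hence the metric quotient `⊔_Y X i` is a complete extended metric space. -/
theorem glue_complete {I Y : Type*} {X : I → Type*}
    [EMetricSpace Y] [CompleteSpace Y]
    [∀ i, EMetricSpace (X i)] [∀ i, CompleteSpace (X i)]
    (C : ℝ≥0) (hC0 : 0 < C) (hC1 : C ≤ 1)
    (j : ∀ i, Y → X i)
    (hne : ∀ i, LipschitzWith 1 (j i))
    (hexp : ∀ (i : I) (y y' : Y), (C : ℝ≥0∞) * edist y y' ≤ edist (j i y) (j i y')) :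
    ∀ u : ℕ → Σ i, X i,
      (∀ ε : ℝ≥0∞, 0 < ε → ∃ N : ℕ, ∀ m n : ℕ, N ≤ m → N ≤ n →
        glueDist j (u m) (u n) < ε) →
      ∃ a : Σ i, X i,
        Filter.Tendsto (fun n => glueDist j (u n) a) Filter.atTop (nhds 0) := by
  intro u hcau
  by_cases hB : ∃ ε : ℝ≥0∞, 0 < ε ∧ ∃ N : ℕ, ∀ n, N ≤ n → ∀ (i' : I) (y : Y),
      ε ≤ glueDist j (u n) ⟨i', j i' y⟩
  · -- Case B : the sequence stays uniformly far from the image of Y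
    obtain ⟨ε, hε, N, hN⟩ := hB
    have key : ∀ δ : ℝ≥0∞, 0 < δ → ∃ M, N ≤ M ∧ ∀ m n, M ≤ m → M ≤ n →
        ∃ (i : I) (x x' : X i), u m = ⟨i, x⟩ ∧ u n = ⟨i, x'⟩ ∧ edist x x' < δ := by
      intro δ hδ
      obtain ⟨M₁, hM₁⟩ := hcau (min δ ε) (lt_min hδ hε)
      refine ⟨max N M₁, le_max_left _ _, fun m n hm hn => ?_⟩
      have hlt := hM₁ m n (le_trans (le_max_right _ _) hm) (le_trans (le_max_right _ _) hn)
      rw [glueDist_eq] at hlt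
      obtain ⟨L, hL, hLlt⟩ := sInf_lt_iff.mp hlt
      rcases gchain_dichotomy hL with ⟨i, x, x', hux, hux', hle⟩ | ⟨i', y, hle⟩
      · exact ⟨i, x, x', hux, hux', lt_of_le_of_lt hle (hLlt.trans_le (min_le_left _ _))⟩
      · exact absurd (lt_of_le_of_lt hle (hLlt.trans_le (min_le_right _ _)))
          (not_lt.mpr (hN m (le_trans (le_max_left _ _) hm) i' y))
    obtain ⟨M₀, hM₀N, hM₀⟩ := key 1 one_pos
    have hsame : ∀ n, M₀ ≤ n → (u n).1 = (u M₀).1 := by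
      intro n hn
      obtain ⟨i, x, x', h1, h2, _⟩ := hM₀ M₀ n le_rfl hn
      rw [h1, h2]
    set i := (u M₀).1 with hidef
    have hsame' : ∀ n : ℕ, (u (M₀ + n)).1 = i := fun n => hsame _ (Nat.le_add_right _ _)
    set v : ℕ → X i := fun n => cast (congrArg X (hsame' n)) (u (M₀ + n)).2 with hv_def
    have huv : ∀ n : ℕ, u (M₀ + n) = ⟨i, v n⟩ := fun n => sigma_cast (hsame' n)
    have hvC : CauchySeq v := by
      rw [EMetric.cauchySeq_iff]
      intro δ hδ
      obtain ⟨M, hMN, hM⟩ := key δ hδ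
      refine ⟨M, fun m hm n hn => ?_⟩
      obtain ⟨i', x, x', h1, h2, hlt⟩ := hM (M₀ + m) (M₀ + n)
        (le_trans hm (Nat.le_add_left _ _)) (le_trans hn (Nat.le_add_left _ _))
      have e1 : (⟨i, v m⟩ : Σ i, X i) = ⟨i', x⟩ := (huv m).symm.trans h1
      have e2 : (⟨i, v n⟩ : Σ i, X i) = ⟨i', x'⟩ := (huv n).symm.trans h2
      obtain ⟨rfl, hx⟩ := Sigma.mk.inj_iff.mp e1
      obtain rfl := eq_of_heq hx
      obtain ⟨-, hx'⟩ := Sigma.mk.inj_iff.mp e2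
      obtain rfl := eq_of_heq hx'
      exact hlt
    obtain ⟨xlim, hxlim⟩ := cauchySeq_tendsto_of_complete hvC
    refine ⟨⟨i, xlim⟩, ?_⟩
    rw [ENNReal.tendsto_nhds_zero]
    intro ε' hε'
    obtain ⟨K, hK⟩ := EMetric.tendsto_atTop.mp hxlim ε' hε'
    rw [Filter.eventually_atTop]
    refine ⟨M₀ + K, fun n hn => ?_⟩
    have hn' : M₀ + (n - M₀) = n := by omega
    have h1 : u n = ⟨i, v (n - M₀)⟩ := by
      have := huv (n - M₀)
      rwa [hn'] at this
    rw [h1]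
    exact le_trans (glueDist_le_edist j i _ xlim) (le_of_lt (hK (n - M₀) (by omega)))
  · -- Case A : the sequence comes arbitrarily close to the image of Y
    push_neg at hB
    set i₀ := (u 0).1 with hi₀
    set e : ℕ → ℝ≥0∞ := fun k => 2⁻¹ ^ k with he_def
    have he1 : (2⁻¹ : ℝ≥0∞) < 1 := by
      rw [ENNReal.inv_lt_one]; exact one_lt_two
    have he : ∀ k, 0 < e k := fun k => ENNReal.pow_pos (by norm_num) k
    have hmono : ∀ {k l : ℕ}, k ≤ l → e l ≤ e k := fun hkl =>
      pow_le_pow_of_le_one zero_le he1.le hkl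
    have htend : Filter.Tendsto e Filter.atTop (nhds 0) :=
      ENNReal.tendsto_pow_atTop_nhds_zero_of_lt_one he1
    choose N hN using fun k => hcau (e k) (he k)
    have hyex : ∀ k, ∃ y : Y, ∀ m, N k ≤ m → glueDist j (u m) ⟨i₀, j i₀ y⟩ < 2 * e k := by
      intro k
      obtain ⟨n, hn, i', y, hyn⟩ := hB (e k) (he k) (N k)
      refine ⟨y, fun m hm => ?_⟩
      have t1 : glueDist j (u m) ⟨i₀, j i₀ y⟩ ≤
          glueDist j (u m) (u n) + (glueDist j (u n) ⟨i', j i' y⟩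
            + glueDist j ⟨i', j i' y⟩ ⟨i₀, j i₀ y⟩) :=
        le_trans (glueDist_triangle j _ (u n) _)
          (add_le_add_right (glueDist_triangle j _ _ _) _)
      rw [glueDist_cross, add_zero] at t1
      calc glueDist j (u m) ⟨i₀, j i₀ y⟩ ≤ _ := t1
        _ < e k + e k := ENNReal.add_lt_add (hN k m n hm hn) hyn
        _ = 2 * e k := (two_mul _).symm
    choose y hy using hyex
    have hC0' : (C : ℝ≥0∞) ≠ 0 := by exact_mod_cast hC0.ne'
    have hCtop : (C : ℝ≥0∞) ≠ ∞ := ENNReal.coe_ne_top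
    have hyC : CauchySeq y := by
      rw [EMetric.cauchySeq_iff]
      intro δ hδ
      have hCδ : 0 < (C : ℝ≥0∞) * δ := ENNReal.mul_pos hC0' hδ.ne'
      have h4 : Filter.Tendsto (fun k => 4 * e k) Filter.atTop (nhds 0) := by
        have := ENNReal.Tendsto.const_mul htend (Or.inr (by norm_num : (4 : ℝ≥0∞) ≠ ∞))
        simpa using this
      obtain ⟨K, hK⟩ := Filter.eventually_atTop.mp (h4.eventually_lt_const hCδ)
      refine ⟨K, fun k hk l hl => ?_⟩
      have h1 := hy k (max (N k) (N l)) (le_max_left _ _)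
      have h2 := hy l (max (N k) (N l)) (le_max_right _ _)
      have hlow := glueDist_lower (j := j) hexp i₀ (y k) i₀ (y l)
      have htri : glueDist j ⟨i₀, j i₀ (y k)⟩ ⟨i₀, j i₀ (y l)⟩ ≤
          glueDist j (u (max (N k) (N l))) ⟨i₀, j i₀ (y k)⟩
            + glueDist j (u (max (N k) (N l))) ⟨i₀, j i₀ (y l)⟩ := by
        rw [glueDist_comm j (u _) ⟨i₀, j i₀ (y k)⟩]
        exact glueDist_triangle j _ _ _
      have hmain : (C : ℝ≥0∞) * edist (y k) (y l) < (C : ℝ≥0∞) * δ := by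
        calc (C : ℝ≥0∞) * edist (y k) (y l) ≤ _ := hlow.trans htri
          _ < 2 * e k + 2 * e l := ENNReal.add_lt_add h1 h2
          _ ≤ 4 * e K := by
              refine le_trans (add_le_add (mul_le_mul_right (hmono hk) 2)
                (mul_le_mul_right (hmono hl) 2)) (le_of_eq ?_)
              ring
          _ < (C : ℝ≥0∞) * δ := hK K le_rfl
      exact (ENNReal.mul_lt_mul_iff_right hC0' hCtop).mp hmain
    obtain ⟨ylim, hylim⟩ := cauchySeq_tendsto_of_complete hyC
    refine ⟨⟨i₀, j i₀ ylim⟩, ?_⟩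
    rw [ENNReal.tendsto_nhds_zero]
    intro ε hε
    have hhalf : 0 < ε / 2 := ENNReal.half_pos hε.ne'
    have h2t : Filter.Tendsto (fun k => 2 * e k) Filter.atTop (nhds 0) := by
      have := ENNReal.Tendsto.const_mul htend (Or.inr (by norm_num : (2 : ℝ≥0∞) ≠ ∞))
      simpa using this
    obtain ⟨K₁, hK₁⟩ := Filter.eventually_atTop.mp (h2t.eventually_lt_const hhalf)
    obtain ⟨K₂, hK₂⟩ := EMetric.tendsto_atTop.mp hylim (ε / 2) hhalf
    set k := max K₁ K₂ with hk_def
    rw [Filter.eventually_atTop]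
    refine ⟨N k, fun n hn => ?_⟩
    have t1 : glueDist j (u n) ⟨i₀, j i₀ ylim⟩ ≤
        glueDist j (u n) ⟨i₀, j i₀ (y k)⟩ + glueDist j ⟨i₀, j i₀ (y k)⟩ ⟨i₀, j i₀ ylim⟩ :=
      glueDist_triangle j _ _ _
    have t2 : glueDist j ⟨i₀, j i₀ (y k)⟩ ⟨i₀, j i₀ ylim⟩ ≤ edist (y k) ylim := by
      refine le_trans (glueDist_le_edist j i₀ _ _) ?_
      simpa using hne i₀ (y k) ylim
    calc glueDist j (u n) ⟨i₀, j i₀ ylim⟩ ≤ _ := t1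
      _ ≤ 2 * e k + edist (y k) ylim := add_le_add (hy k n hn).le t2
      _ ≤ ε / 2 + ε / 2 := add_le_add (hK₁ k (le_max_left _ _)).le (hK₂ k (le_max_right _ _)).le
      _ = ε := ENNReal.add_halves ε
end

section
/- Let 0 < C ≤ 1 and let j_i : Y → X_i (i ∈ I) be a family of nonexpansive, C-expansive maps between complete extended metric spaces. Assume each X_i is convex, Y is compact, and for every y,y' ∈ Y the infimum inf_{i ∈ I} d_{X_i}(j_i y, j_i y') is attained for some i ∈ I. Then the glued space ⊔_Y X_i is convex. -/
open ENNReal NNReal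

set_option linter.unusedVariables false
set_option linter.unusedSectionVars false

namespace GlueConvexAux

set_option linter.unusedSectionVars false
variable {I Y : Type*} {X : I → Type*} [EMetricSpace Y] [∀ i, EMetricSpace (X i)]

/-- two-point dependent vector over `![i₁, i₂]`. -/
noncomputable def two {i₁ i₂ : I} (u : X i₁) (v : X i₂) : ∀ s : Fin 2, X (![i₁, i₂] s) :=
  fun s => Fin.cases (motive := fun s => X (![i₁, i₂] s)) u
    (fun s' => Fin.cases (motive := fun s' : Fin 1 => X (![i₁, i₂] s'.succ)) v
      (fun e => e.elim0) s') s

lemma glue_le_single (j : ∀ i, Y → X i) (i : I) (x x' : X i) :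
    glueDist j ⟨i, x⟩ ⟨i, x'⟩ ≤ edist x x' := by
  apply sInf_le
  exact ⟨0, fun _ => i, fun _ => x, fun _ => x', rfl, rfl, fun s => s.elim0, by simp⟩

lemma glue_le_start (j : ∀ i, Y → X i) (a : Σ i, X i) (i₂ : I) (y : Y) :
    glueDist j a ⟨i₂, j i₂ y⟩ ≤ edist a.2 (j a.1 y) := by
  obtain ⟨i₁, x⟩ := a
  apply sInf_le
  refine ⟨1, ![i₁, i₂], two x (j i₂ y), two (j i₁ y) (j i₂ y), rfl, rfl, ?_, ?_⟩
  · intro s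
    obtain rfl : s = 0 := Subsingleton.elim _ _
    exact ⟨y, rfl, rfl⟩
  · show edist x (j i₁ y) = ∑ s : Fin 2, edist (two x (j i₂ y) s) (two (j i₁ y) (j i₂ y) s)
    rw [Fin.sum_univ_two]
    show edist x (j i₁ y) = edist x (j i₁ y) + edist (j i₂ y) (j i₂ y)
    rw [edist_self, add_zero]
  
lemma glue_le_end (j : ∀ i, Y → X i) (i₁ : I) (y : Y) (b : Σ i, X i) :
    glueDist j ⟨i₁, j i₁ y⟩ b ≤ edist (j b.1 y) b.2 := by
  obtain ⟨i₂, x⟩ := b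
  apply sInf_le
  refine ⟨1, ![i₁, i₂], two (j i₁ y) (j i₂ y), two (j i₁ y) x, rfl, rfl, ?_, ?_⟩
  · intro s
    obtain rfl : s = 0 := Subsingleton.elim _ _
    exact ⟨y, rfl, rfl⟩
  · show edist (j i₂ y) x = ∑ s : Fin 2, edist (two (j i₁ y) (j i₂ y) s) (two (j i₁ y) x s)
    rw [Fin.sum_univ_two]
    show edist (j i₂ y) x = edist (j i₁ y) (j i₁ y) + edist (j i₂ y) x
    rw [edist_self, zero_add]

def chainSet (j : ∀ i, Y → X i) (a b : Σ i, X i) : Set ℝ≥0∞ :=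
  {L : ℝ≥0∞ | ∃ (n : ℕ) (idx : Fin (n + 1) → I) (p q : ∀ s, X (idx s)),
    (⟨idx 0, p 0⟩ : Σ i, X i) = a ∧ (⟨idx (Fin.last n), q (Fin.last n)⟩ : Σ i, X i) = b ∧
    (∀ s : Fin n, ∃ y : Y,
      q s.castSucc = j (idx s.castSucc) y ∧ p s.succ = j (idx s.succ) y) ∧
    L = ∑ s, edist (p s) (q s)}

lemma glueDist_eq (j : ∀ i, Y → X i) (a b : Σ i, X i) :
    glueDist j a b = sInf (chainSet j a b) := rfl

def castX {i i' : I} (h : i = i') (x : X i) : X i' := h ▸ x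

lemma sigma_mk_cast {i i' : I} (h : i = i') (x : X i) :
    (⟨i', castX h x⟩ : Σ i, X i) = ⟨i, x⟩ := by subst h; rfl

lemma edist_cast {i i' : I} (h : i = i') (x x' : X i) :
    edist (castX h x) (castX h x') = edist x x' := by subst h; rfl

lemma cast_eq_j (j : ∀ i, Y → X i) {i i' : I} (h : i = i') (x : X i) (y : Y)
    (hx : x = j i y) : castX h x = j i' y := by subst h; exact hx

lemma le_sInf_add' {S : Set ℝ≥0∞} {A e : ℝ≥0∞} (h : ∀ L ∈ S, A ≤ L + e) :
    A ≤ sInf S + e := by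
  rw [ENNReal.sInf_add]; exact le_iInf₂ h

lemma glue_update_mem (j : ∀ i, Y → X i) (a : Σ i, X i) (i : I) (x x' : X i)
    {L : ℝ≥0∞} (hL : L ∈ chainSet j a ⟨i, x⟩) :
    glueDist j a ⟨i, x'⟩ ≤ L + edist x x' := by
  obtain ⟨n, idx, p, q, hh, ht, hl, rfl⟩ := hL
  have h1 : idx (Fin.last n) = i := (Sigma.ext_iff.mp ht).1
  subst h1
  have h2 : q (Fin.last n) = x := eq_of_heq (Sigma.ext_iff.mp ht).2
  subst h2
  set q' : ∀ s, X (idx s) := Function.update q (Fin.last n) x' with hq'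
  have hmem : (∑ s, edist (p s) (q' s)) ∈ chainSet j a ⟨idx (Fin.last n), x'⟩ :=
    ⟨n, idx, p, q', hh, by simp [hq'], fun s => by
      obtain ⟨y, h₁, h₂⟩ := hl s
      exact ⟨y, by rw [hq', Function.update_of_ne (Fin.castSucc_lt_last s).ne]; exact h₁, h₂⟩,
      rfl⟩
  refine le_trans (sInf_le hmem) ?_
  · rw [Fin.sum_univ_castSucc, Fin.sum_univ_castSucc (f := fun s => edist (p s) (q s))]
    have e1 : ∀ t : Fin n, edist (p t.castSucc) (q' t.castSucc) = edist (p t.castSucc) (q t.castSucc) := by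
      intro t
      rw [hq', Function.update_of_ne (Fin.castSucc_lt_last t).ne]
    rw [Finset.sum_congr rfl (fun t _ => e1 t)]
    have e2 : edist (p (Fin.last n)) (q' (Fin.last n)) ≤
        edist (p (Fin.last n)) (q (Fin.last n)) + edist (q (Fin.last n)) x' := by
      rw [hq', Function.update_self]
      exact edist_triangle _ _ _
    rw [add_assoc]
    exact add_le_add_right e2 _

lemma glue_update (j : ∀ i, Y → X i) (a : Σ i, X i) (i : I) (x x' : X i) :
    glueDist j a ⟨i, x'⟩ ≤ glueDist j a ⟨i, x⟩ + edist x x' := by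
  rw [glueDist_eq j a ⟨i, x⟩]
  exact le_sInf_add' fun L hL => glue_update_mem j a i x x' hL

def isnoc {n : ℕ} (idx : Fin (n + 1) → I) (i₂ : I) : Fin (n + 2) → I :=
  Fin.snoc (α := fun _ : Fin (n + 2) => I) idx i₂

lemma isnoc_castSucc {n : ℕ} (idx : Fin (n + 1) → I) (i₂ : I) (t : Fin (n + 1)) :
    isnoc idx i₂ t.castSucc = idx t := Fin.snoc_castSucc ..

lemma isnoc_last {n : ℕ} (idx : Fin (n + 1) → I) (i₂ : I) :
    isnoc idx i₂ (Fin.last (n + 1)) = i₂ := Fin.snoc_last ..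

noncomputable def dsnoc {n : ℕ} {idx : Fin (n + 1) → I} {i₂ : I}
    (p : ∀ s, X (idx s)) (v : X i₂) : ∀ s : Fin (n + 2), X (isnoc idx i₂ s) :=
  fun s => Fin.lastCases (motive := fun s => X (isnoc idx i₂ s))
    (castX (isnoc_last idx i₂).symm v)
    (fun t => castX (isnoc_castSucc idx i₂ t).symm (p t)) s

lemma dsnoc_castSucc {n : ℕ} {idx : Fin (n + 1) → I} {i₂ : I}
    (p : ∀ s, X (idx s)) (v : X i₂) (t : Fin (n + 1)) :
    dsnoc p v t.castSucc = castX (isnoc_castSucc idx i₂ t).symm (p t) :=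
  Fin.lastCases_castSucc ..

lemma dsnoc_last {n : ℕ} {idx : Fin (n + 1) → I} {i₂ : I}
    (p : ∀ s, X (idx s)) (v : X i₂) :
    dsnoc p v (Fin.last (n + 1)) = castX (isnoc_last idx i₂).symm v :=
  Fin.lastCases_last ..

lemma glue_snoc_mem (j : ∀ i, Y → X i) (a : Σ i, X i) (i₁ i₂ : I) (y : Y)
    {L : ℝ≥0∞} (hL : L ∈ chainSet j a ⟨i₁, j i₁ y⟩) :
    glueDist j a ⟨i₂, j i₂ y⟩ ≤ L := by
  obtain ⟨n, idx, p, q, hh, ht, hl, rfl⟩ := hL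
  have h1 : idx (Fin.last n) = i₁ := (Sigma.ext_iff.mp ht).1
  subst h1
  have h2 : q (Fin.last n) = j (idx (Fin.last n)) y := eq_of_heq (Sigma.ext_iff.mp ht).2
  have hmem : (∑ s : Fin (n + 2), edist (dsnoc p (j i₂ y) s) (dsnoc q (j i₂ y) s)) ∈
      chainSet j a ⟨i₂, j i₂ y⟩ := by
    refine ⟨n + 1, isnoc idx i₂, dsnoc p (j i₂ y), dsnoc q (j i₂ y), ?_, ?_, ?_, rfl⟩
    · rw [show (0 : Fin (n + 2)) = Fin.castSucc 0 by rfl, dsnoc_castSucc]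
      rw [sigma_mk_cast]
      exact hh
    · rw [dsnoc_last, sigma_mk_cast]
    · intro s
      refine Fin.lastCases ?_ ?_ s
      · refine ⟨y, ?_, ?_⟩
        · rw [dsnoc_castSucc]
          exact cast_eq_j j _ _ _ h2
        · rw [Fin.succ_last, dsnoc_last]
          exact cast_eq_j j _ _ _ rfl
      · intro t
        obtain ⟨y₀, hq₀, hp₀⟩ := hl t
        refine ⟨y₀, ?_, ?_⟩
        · rw [dsnoc_castSucc]
          exact cast_eq_j j _ _ _ hq₀
        · rw [Fin.succ_castSucc, dsnoc_castSucc]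
          exact cast_eq_j j _ _ _ hp₀
  refine le_trans (sInf_le hmem) ?_
  rw [Fin.sum_univ_castSucc]
  have e1 : ∀ t : Fin (n + 1),
      edist (dsnoc p (j i₂ y) t.castSucc) (dsnoc q (j i₂ y) t.castSucc) =
      edist (p t) (q t) := by
    intro t
    rw [dsnoc_castSucc, dsnoc_castSucc, edist_cast]
  rw [Finset.sum_congr rfl fun t _ => e1 t, dsnoc_last, dsnoc_last, edist_cast, edist_self,
    add_zero]

lemma glue_snoc (j : ∀ i, Y → X i) (a : Σ i, X i) (i₁ i₂ : I) (y : Y) :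
    glueDist j a ⟨i₂, j i₂ y⟩ ≤ glueDist j a ⟨i₁, j i₁ y⟩ := by
  rw [glueDist_eq j a ⟨i₁, j i₁ y⟩]
  exact le_sInf fun L hL => glue_snoc_mem j a i₁ i₂ y hL

lemma glue_le_chain_right (j : ∀ i, Y → X i) (a : Σ i, X i) : ∀ (n : ℕ) (c b : Σ i, X i)
    (idx : Fin (n + 1) → I) (p q : ∀ s, X (idx s)),
    (⟨idx 0, p 0⟩ : Σ i, X i) = c → (⟨idx (Fin.last n), q (Fin.last n)⟩ : Σ i, X i) = b →
    (∀ s : Fin n, ∃ y : Y,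
      q s.castSucc = j (idx s.castSucc) y ∧ p s.succ = j (idx s.succ) y) →
    glueDist j a b ≤ glueDist j a c + ∑ s, edist (p s) (q s) := by
  intro n
  induction n with
  | zero =>
    intro c b idx p q hh ht _
    subst hh; subst ht
    have : (∑ s : Fin 1, edist (p s) (q s)) = edist (p 0) (q 0) := by
      simp [Fin.sum_univ_one]
    rw [show Fin.last 0 = 0 from rfl] at *
    rw [this]
    exact glue_update j a (idx 0) (p 0) (q 0)
  | succ n ih =>
    intro c b idx p q hh ht hl
    obtain ⟨y, hq, hp⟩ := hl (Fin.last n)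
    have h1 : glueDist j a b ≤
        glueDist j a ⟨idx (Fin.last (n + 1)), p (Fin.last (n + 1))⟩ +
          edist (p (Fin.last (n + 1))) (q (Fin.last (n + 1))) := by
      rw [← ht]
      exact glue_update j a _ _ _
    have h2 : glueDist j a ⟨idx (Fin.last (n + 1)), p (Fin.last (n + 1))⟩ ≤
        glueDist j a ⟨idx ((Fin.last n).castSucc), q ((Fin.last n).castSucc)⟩ := by
      rw [hq]
      have : (⟨idx (Fin.last (n + 1)), p (Fin.last (n + 1))⟩ : Σ i, X i) =
          ⟨idx ((Fin.last n).succ), j (idx ((Fin.last n).succ)) y⟩ := by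
        rw [← Fin.succ_last]
        exact congrArg _ hp
      rw [this]
      exact glue_snoc j a _ _ y
    have h3 : glueDist j a ⟨idx ((Fin.last n).castSucc), q ((Fin.last n).castSucc)⟩ ≤
        glueDist j a c + ∑ s : Fin (n + 1), edist (p s.castSucc) (q s.castSucc) := by
      refine ih c _ (fun s => idx s.castSucc) (fun s => p s.castSucc) (fun s => q s.castSucc)
        ?_ rfl ?_
      · exact hh
      · intro s
        obtain ⟨y₀, hq₀, hp₀⟩ := hl s.castSucc
        refine ⟨y₀, hq₀, ?_⟩
        rw [Fin.succ_castSucc] at hp₀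
        exact hp₀
    calc glueDist j a b ≤ _ := h1
      _ ≤ glueDist j a ⟨idx ((Fin.last n).castSucc), q ((Fin.last n).castSucc)⟩ +
          edist (p (Fin.last (n + 1))) (q (Fin.last (n + 1))) := add_le_add_left h2 _
      _ ≤ (glueDist j a c + ∑ s : Fin (n + 1), edist (p s.castSucc) (q s.castSucc)) +
          edist (p (Fin.last (n + 1))) (q (Fin.last (n + 1))) := add_le_add_left h3 _
      _ = glueDist j a c + ∑ s, edist (p s) (q s) := by
          rw [Fin.sum_univ_castSucc (f := fun s => edist (p s) (q s)), add_assoc]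

lemma le_add_sInf' {S : Set ℝ≥0∞} {A e : ℝ≥0∞} (h : ∀ L ∈ S, A ≤ e + L) :
    A ≤ e + sInf S := by
  rcases S.eq_empty_or_nonempty with rfl | hS
  · simp
  · haveI : Nonempty S := hS.to_subtype
    rw [sInf_eq_iInf', add_iInf]
    exact le_iInf fun L => h L L.2

lemma glue_triangle (j : ∀ i, Y → X i) (a c b : Σ i, X i) :
    glueDist j a b ≤ glueDist j a c + glueDist j c b := by
  rw [glueDist_eq j c b]
  refine le_add_sInf' fun L hL => ?_
  obtain ⟨n, idx, p, q, hh, ht, hl, rfl⟩ := hL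
  exact glue_le_chain_right j a n c b idx p q hh ht hl

noncomputable def rho (j : ∀ i, Y → X i) (y y' : Y) : ℝ≥0∞ :=
  ⨅ i, edist (j i y) (j i y')

noncomputable def delta (j : ∀ i, Y → X i) (y y' : Y) : ℝ≥0∞ :=
  sInf {L : ℝ≥0∞ | ∃ (m : ℕ) (z : Fin (m + 1) → Y), z 0 = y ∧ z (Fin.last m) = y' ∧
    L = ∑ t : Fin m, rho j (z t.castSucc) (z t.succ)}

noncomputable def Vab (j : ∀ i, Y → X i) (a b : Σ i, X i) : ℝ≥0∞ :=
  ⨅ (y : Y) (y' : Y), edist a.2 (j a.1 y) + delta j y y' + edist (j b.1 y') b.2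

section rho_delta

variable (j : ∀ i, Y → X i)

lemma rho_le_edist [Nonempty I] (hne : ∀ i, LipschitzWith 1 (j i)) (y y' : Y) :
    rho j y y' ≤ edist y y' := by
  obtain ⟨i⟩ := ‹Nonempty I›
  refine le_trans (iInf_le _ i) ?_
  simpa using hne i y y'

lemma rho_self [Nonempty I] (y : Y) : rho j y y = 0 := by
  obtain ⟨i⟩ := ‹Nonempty I›
  exact le_antisymm (le_trans (iInf_le _ i) (by simp)) zero_le

lemma rho_symm (y y' : Y) : rho j y y' = rho j y' y := by
  unfold rho
  exact iInf_congr fun i => edist_comm _ _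

lemma rho_le_add (hne : ∀ i, LipschitzWith 1 (j i))
    (hinf : ∀ y y' : Y, ∃ i : I, edist (j i y) (j i y') = ⨅ i' : I, edist (j i' y) (j i' y'))
    (u v u' v' : Y) :
    rho j u v ≤ edist u u' + rho j u' v' + edist v' v := by
  obtain ⟨i, hi⟩ := hinf u' v'
  refine le_trans (iInf_le _ i) ?_
  calc edist (j i u) (j i v) ≤ edist (j i u) (j i u') + edist (j i u') (j i v') +
      edist (j i v') (j i v) := edist_triangle4 _ _ _ _
    _ ≤ edist u u' + rho j u' v' + edist v' v := by
      refine add_le_add (add_le_add (by simpa using hne i u u') (le_of_eq hi))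
        (by simpa using hne i v' v)

lemma delta_le_sum (m : ℕ) (z : Fin (m + 1) → Y) :
    delta j (z 0) (z (Fin.last m)) ≤ ∑ t : Fin m, rho j (z t.castSucc) (z t.succ) :=
  sInf_le ⟨m, z, rfl, rfl, rfl⟩

lemma delta_self [Nonempty I] (y : Y) : delta j y y = 0 := by
  refine le_antisymm ?_ zero_le
  have := delta_le_sum j 0 (fun _ => y)
  simpa using this

lemma delta_le_rho (y y' : Y) : delta j y y' ≤ rho j y y' := by
  have := delta_le_sum j 1 ![y, y']
  simpa using this

lemma delta_cons (y y₂ y' : Y) : delta j y y' ≤ rho j y y₂ + delta j y₂ y' := by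
  rw [show delta j y₂ y' = sInf _ from rfl]
  refine le_add_sInf' fun L hL => ?_
  obtain ⟨m, z, hz0, hzl, rfl⟩ := hL
  have key := delta_le_sum j (m + 1) (Fin.cons (α := fun _ : Fin (m + 2) => Y) y z)
  have e1 : Fin.cons (α := fun _ : Fin (m + 2) => Y) y z 0 = y := rfl
  have e2 : Fin.cons (α := fun _ : Fin (m + 2) => Y) y z (Fin.last (m + 1)) = y' := by
    rw [← Fin.succ_last, Fin.cons_succ, hzl]
  rw [e1, e2] at key
  refine le_trans key (le_of_eq ?_)
  rw [Fin.sum_univ_succ]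
  have c1 : Fin.cons (α := fun _ : Fin (m + 2) => Y) y z ((0 : Fin (m + 1)).castSucc) = y := rfl
  have c2 : Fin.cons (α := fun _ : Fin (m + 2) => Y) y z ((0 : Fin (m + 1)).succ) = z 0 := rfl
  have c3 : ∀ t : Fin m, rho j
      (Fin.cons (α := fun _ : Fin (m + 2) => Y) y z t.succ.castSucc)
      (Fin.cons (α := fun _ : Fin (m + 2) => Y) y z t.succ.succ) =
      rho j (z t.castSucc) (z t.succ) := fun t => by
    rw [← Fin.succ_castSucc, Fin.cons_succ, Fin.cons_succ]
  rw [Finset.sum_congr rfl fun t _ => c3 t, c1, c2, hz0]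

lemma delta_snoc (y y₁ y₂ : Y) : delta j y y₂ ≤ delta j y y₁ + rho j y₁ y₂ := by
  rw [show delta j y y₁ = sInf _ from rfl]
  refine le_sInf_add' fun L hL => ?_
  obtain ⟨m, z, hz0, hzl, rfl⟩ := hL
  have key := delta_le_sum j (m + 1) (Fin.snoc (α := fun _ : Fin (m + 2) => Y) z y₂)
  have e1 : Fin.snoc (α := fun _ : Fin (m + 2) => Y) z y₂ 0 = y := by
    rw [show (0 : Fin (m + 2)) = (0 : Fin (m + 1)).castSucc from rfl, Fin.snoc_castSucc, hz0]
  have e2 : Fin.snoc (α := fun _ : Fin (m + 2) => Y) z y₂ (Fin.last (m + 1)) = y₂ :=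
    Fin.snoc_last _ _
  rw [e1, e2] at key
  refine le_trans key (le_of_eq ?_)
  rw [Fin.sum_univ_castSucc]
  congr 1
  · refine Finset.sum_congr rfl fun t _ => ?_
    rw [Fin.succ_castSucc, Fin.snoc_castSucc, Fin.snoc_castSucc]
  · rw [Fin.succ_last, Fin.snoc_last, Fin.snoc_castSucc, hzl]

end rho_delta

lemma chain_split [Nonempty I] (j : ∀ i, Y → X i) : ∀ (m : ℕ) (z : Fin (m + 1) → Y) (t₀ : Fin m),
    delta j (z 0) (z t₀.castSucc) + rho j (z t₀.castSucc) (z t₀.succ) +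
      delta j (z t₀.succ) (z (Fin.last m)) ≤ ∑ t : Fin m, rho j (z t.castSucc) (z t.succ) := by
  intro m
  induction m with
  | zero => exact fun z t₀ => t₀.elim0
  | succ m ih =>
    intro z t₀
    rw [Fin.sum_univ_castSucc]
    have trans : ∀ t : Fin m, rho j (z t.castSucc.castSucc) (z t.castSucc.succ) =
        rho j ((z ∘ Fin.castSucc) t.castSucc) ((z ∘ Fin.castSucc) t.succ) := fun t => by
      simp only [Function.comp_apply, Fin.succ_castSucc]
    refine Fin.lastCases ?_ ?_ t₀
    · have h3 : z (Fin.last m).succ = z (Fin.last (m + 1)) := by rw [Fin.succ_last]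
      rw [h3, delta_self, add_zero]
      have h1 : delta j (z 0) (z (Fin.last m).castSucc) ≤
          ∑ t : Fin m, rho j (z t.castSucc.castSucc) (z t.castSucc.succ) := by
        rw [Finset.sum_congr rfl fun t _ => trans t]
        have := delta_le_sum j m (z ∘ Fin.castSucc)
        simpa using this
      exact add_le_add h1 le_rfl
    · intro i
      have key := ih (z ∘ Fin.castSucc) i
      simp only [Function.comp_apply] at key
      rw [Fin.castSucc_zero] at key
      have e1 : z (i.succ.castSucc) = (z ∘ Fin.castSucc) i.succ := rfl
      have snoc := delta_snoc j (z i.succ.castSucc) (z ((Fin.last m).castSucc))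
        (z (Fin.last (m + 1)))
      have e2 : z (Fin.last (m + 1)) = z ((Fin.last m).succ) := by rw [Fin.succ_last]
      calc delta j (z 0) (z (i.castSucc).castSucc) +
            rho j (z (i.castSucc).castSucc) (z (i.castSucc).succ) +
            delta j (z (i.castSucc).succ) (z (Fin.last (m + 1)))
          ≤ delta j (z 0) (z i.castSucc.castSucc) + rho j (z i.castSucc.castSucc) (z i.succ.castSucc) +
            (delta j (z i.succ.castSucc) (z ((Fin.last m).castSucc)) +
              rho j (z ((Fin.last m).castSucc)) (z (Fin.last (m + 1)))) := by
            rw [Fin.succ_castSucc]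
            exact add_le_add le_rfl snoc
        _ = (delta j (z 0) (z i.castSucc.castSucc) +
              rho j (z i.castSucc.castSucc) (z i.succ.castSucc) +
              delta j (z i.succ.castSucc) (z ((Fin.last m).castSucc))) +
            rho j (z ((Fin.last m).castSucc)) (z (Fin.last (m + 1))) := by ring
        _ ≤ (∑ t : Fin m, rho j (z t.castSucc.castSucc) (z t.succ.castSucc)) +
            rho j (z ((Fin.last m).castSucc)) (z (Fin.last (m + 1))) := add_le_add key le_rfl
        _ ≤ _ := by
            rw [e2]
            refine add_le_add (le_of_eq (Finset.sum_congr rfl fun t _ => ?_)) le_rfl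
            rw [Fin.succ_castSucc]

lemma glue_iota_le_chain (j : ∀ i, Y → X i)
    (hinf : ∀ y y' : Y, ∃ i : I, edist (j i y) (j i y') = ⨅ i' : I, edist (j i' y) (j i' y')) :
    ∀ (m : ℕ) (z : Fin (m + 1) → Y) (i₁ i₂ : I),
    glueDist j ⟨i₁, j i₁ (z 0)⟩ ⟨i₂, j i₂ (z (Fin.last m))⟩ ≤
      ∑ t : Fin m, rho j (z t.castSucc) (z t.succ) := by
  intro m
  induction m with
  | zero =>
    intro z i₁ i₂
    have := glue_le_start j ⟨i₁, j i₁ (z 0)⟩ i₂ (z 0)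
    simp only [Finset.univ_eq_empty, Finset.sum_empty]
    rw [show Fin.last 0 = 0 from rfl]
    simpa using this
  | succ m ih =>
    intro z i₁ i₂
    obtain ⟨i', hi'⟩ := hinf (z ((Fin.last m).castSucc)) (z (Fin.last (m + 1)))
    have h1 := glue_triangle j ⟨i₁, j i₁ (z 0)⟩ ⟨i', j i' (z ((Fin.last m).castSucc))⟩
      ⟨i₂, j i₂ (z (Fin.last (m + 1)))⟩
    have h2 := ih (z ∘ Fin.castSucc) i₁ i'
    simp only [Function.comp_apply, Fin.castSucc_zero] at h2
    have h3 := glue_le_start j ⟨i', j i' (z ((Fin.last m).castSucc))⟩ i₂ (z (Fin.last (m + 1)))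
    rw [show (⟨i', j i' (z ((Fin.last m).castSucc))⟩ : Σ i, X i).2 = j i' (z ((Fin.last m).castSucc)) from rfl] at h3
    refine le_trans h1 ?_
    rw [Fin.sum_univ_castSucc]
    refine add_le_add (le_trans h2 (le_of_eq (Finset.sum_congr rfl fun t _ => ?_)))
      (le_trans h3 ?_)
    · rw [Fin.succ_castSucc]
    · rw [show (Fin.last m).succ = Fin.last (m + 1) from Fin.succ_last m]
      exact le_of_eq hi'

lemma glue_le_delta (j : ∀ i, Y → X i)
    (hinf : ∀ y y' : Y, ∃ i : I, edist (j i y) (j i y') = ⨅ i' : I, edist (j i' y) (j i' y'))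
    (a b : Σ i, X i) (y y' : Y) :
    glueDist j a b ≤ edist a.2 (j a.1 y) + delta j y y' + edist (j b.1 y') b.2 := by
  have h1 := glue_triangle j a ⟨a.1, j a.1 y⟩ b
  have h2 := glue_triangle j ⟨a.1, j a.1 y⟩ (⟨b.1, j b.1 y'⟩ : Σ i, X i) b
  have h3 := glue_le_start j a a.1 y
  have h4 := glue_le_end j b.1 y' b
  have h5 : glueDist j (⟨a.1, j a.1 y⟩ : Σ i, X i) ⟨b.1, j b.1 y'⟩ ≤ delta j y y' := by
    rw [show delta j y y' = sInf _ from rfl]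
    refine le_sInf fun L hL => ?_
    obtain ⟨m, z, hz0, hzl, rfl⟩ := hL
    subst hz0; subst hzl
    exact glue_iota_le_chain j hinf m z a.1 b.1
  calc glueDist j a b ≤ _ := h1
    _ ≤ glueDist j a ⟨a.1, j a.1 y⟩ +
        (glueDist j (⟨a.1, j a.1 y⟩ : Σ i, X i) ⟨b.1, j b.1 y'⟩ + glueDist j ⟨b.1, j b.1 y'⟩ b) :=
      add_le_add le_rfl h2
    _ ≤ edist a.2 (j a.1 y) + (delta j y y' + edist (j b.1 y') b.2) :=
      add_le_add h3 (add_le_add h5 h4)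
    _ = _ := by ring

lemma chain_lower (j : ∀ i, Y → X i) {n : ℕ} (a b : Σ i, X i)
    (idx : Fin (n + 1 + 1) → I) (p q : ∀ s, X (idx s))
    (hh : (⟨idx 0, p 0⟩ : Σ i, X i) = a)
    (ht : (⟨idx (Fin.last (n + 1)), q (Fin.last (n + 1))⟩ : Σ i, X i) = b)
    (hl : ∀ s : Fin (n + 1), ∃ y : Y,
      q s.castSucc = j (idx s.castSucc) y ∧ p s.succ = j (idx s.succ) y) :
    ∃ y y' : Y, edist a.2 (j a.1 y) + delta j y y' + edist (j b.1 y') b.2 ≤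
      ∑ s, edist (p s) (q s) := by
  obtain ⟨ia, xa⟩ := a
  obtain ⟨ib, xb⟩ := b
  have ha1 : idx 0 = ia := (Sigma.ext_iff.mp hh).1
  subst ha1
  have ha2 : p 0 = xa := eq_of_heq (Sigma.ext_iff.mp hh).2
  subst ha2
  have hb1 : idx (Fin.last (n + 1)) = ib := (Sigma.ext_iff.mp ht).1
  subst hb1
  have hb2 : q (Fin.last (n + 1)) = xb := eq_of_heq (Sigma.ext_iff.mp ht).2
  subst hb2
  set w : Fin (n + 1) → Y := fun s => (hl s).choose with hw
  have hws : ∀ s : Fin (n + 1),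
      q s.castSucc = j (idx s.castSucc) (w s) ∧ p s.succ = j (idx s.succ) (w s) :=
    fun s => (hl s).choose_spec
  refine ⟨w 0, w (Fin.last n), ?_⟩
  have hsum : (∑ s, edist (p s) (q s)) = edist (p 0) (q 0) +
      ((∑ t : Fin n, edist (p t.castSucc.succ) (q t.castSucc.succ)) +
        edist (p (Fin.last n).succ) (q (Fin.last n).succ)) := by
    rw [Fin.sum_univ_succ]
    congr 1
    rw [Fin.sum_univ_castSucc (f := fun s : Fin (n + 1) => edist (p s.succ) (q s.succ))]
  rw [hsum]
  have e0 : edist (p 0) (q 0) = edist (p 0) (j (idx 0) (w 0)) := by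
    rw [show q 0 = q ((0 : Fin (n + 1)).castSucc) from rfl, (hws 0).1]; rfl
  have elast : edist (p (Fin.last n).succ) (q (Fin.last n).succ) =
      edist (j (idx (Fin.last (n + 1))) (w (Fin.last n))) (q (Fin.last (n + 1))) := by
    rw [(hws (Fin.last n)).2, show (Fin.last n).succ = Fin.last (n + 1) from Fin.succ_last n]
  have emid : delta j (w 0) (w (Fin.last n)) ≤
      ∑ t : Fin n, edist (p t.castSucc.succ) (q t.castSucc.succ) := by
    refine le_trans (delta_le_sum j n w) (Finset.sum_le_sum fun t _ => ?_)
    have h1 : p t.castSucc.succ = j (idx t.castSucc.succ) (w t.castSucc) := (hws t.castSucc).2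
    have h2 : q t.castSucc.succ = j (idx t.castSucc.succ) (w t.succ) := by
      rw [Fin.succ_castSucc, (hws t.succ).1]
    rw [h1, h2]
    exact iInf_le _ _
  rw [← e0, ← elast, add_assoc]
  exact add_le_add le_rfl (add_le_add emid le_rfl)

lemma V_attained [Nonempty I] [Nonempty Y] [CompactSpace Y] (j : ∀ i, Y → X i)
    (hne : ∀ i, LipschitzWith 1 (j i)) (a b : Σ i, X i) :
    ∃ y y' : Y, edist a.2 (j a.1 y) + delta j y y' + edist (j b.1 y') b.2 = Vab j a b := by
  set F : Y × Y → ℝ≥0∞ :=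
    fun yy => edist a.2 (j a.1 yy.1) + delta j yy.1 yy.2 + edist (j b.1 yy.2) b.2 with hF
  have hedist : ∀ (i : I) (u u' : Y), edist (j i u) (j i u') ≤ edist u u' :=
    fun i u u' => by simpa using hne i u u'
  have hbound : ∀ x x' : Y × Y, F x ≤ F x' + 4 * edist x x' := by
    intro x x'
    have h1 : edist x.1 x'.1 ≤ edist x x' := by
      rw [Prod.edist_eq]; exact le_sup_left
    have h2 : edist x.2 x'.2 ≤ edist x x' := by
      rw [Prod.edist_eq]; exact le_sup_right
    have e1 : edist a.2 (j a.1 x.1) ≤ edist a.2 (j a.1 x'.1) + edist x x' :=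
      calc edist a.2 (j a.1 x.1) ≤ edist a.2 (j a.1 x'.1) + edist (j a.1 x'.1) (j a.1 x.1) :=
            edist_triangle _ _ _
        _ ≤ edist a.2 (j a.1 x'.1) + edist x x' := by
            refine add_le_add le_rfl (le_trans (hedist _ _ _) ?_)
            rw [edist_comm]; exact h1
    have e2 : delta j x.1 x.2 ≤ delta j x'.1 x'.2 + edist x x' + edist x x' :=
      calc delta j x.1 x.2 ≤ rho j x.1 x'.1 + delta j x'.1 x.2 := delta_cons j _ _ _
        _ ≤ rho j x.1 x'.1 + (delta j x'.1 x'.2 + rho j x'.2 x.2) :=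
            add_le_add le_rfl (delta_snoc j _ _ _)
        _ ≤ edist x x' + (delta j x'.1 x'.2 + edist x x') := by
            refine add_le_add (le_trans (rho_le_edist j hne _ _) h1) (add_le_add le_rfl
              (le_trans (rho_le_edist j hne _ _) ?_))
            rw [edist_comm]; exact h2
        _ = delta j x'.1 x'.2 + edist x x' + edist x x' := by ring
    have e3 : edist (j b.1 x.2) b.2 ≤ edist (j b.1 x'.2) b.2 + edist x x' :=
      calc edist (j b.1 x.2) b.2 ≤ edist (j b.1 x.2) (j b.1 x'.2) + edist (j b.1 x'.2) b.2 :=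
            edist_triangle _ _ _
        _ ≤ edist x x' + edist (j b.1 x'.2) b.2 :=
            add_le_add (le_trans (hedist _ _ _) h2) le_rfl
        _ = edist (j b.1 x'.2) b.2 + edist x x' := by ring
    calc F x ≤ (edist a.2 (j a.1 x'.1) + edist x x') +
        (delta j x'.1 x'.2 + edist x x' + edist x x') +
        (edist (j b.1 x'.2) b.2 + edist x x') := add_le_add (add_le_add e1 e2) e3
      _ = F x' + 4 * edist x x' := by rw [hF]; ring
  have hcont : Continuous F := continuous_of_le_add_edist 4 (by norm_num) hbound
  obtain ⟨⟨y, y'⟩, -, hmin⟩ := isCompact_univ.exists_isMinOn Set.univ_nonempty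
    hcont.continuousOn
  refine ⟨y, y', le_antisymm ?_ ?_⟩
  · exact le_iInf fun u => le_iInf fun v => hmin (Set.mem_univ (u, v))
  · exact iInf_le_of_le y (iInf_le _ y')

lemma edist_eq_of_sigma_eq {i i' : I} {x u : X i} {x' u' : X i'}
    (h1 : (⟨i, x⟩ : Σ i, X i) = ⟨i', x'⟩) (h2 : (⟨i, u⟩ : Σ i, X i) = ⟨i', u'⟩) :
    edist x u = edist x' u' := by
  have e : i = i' := congrArg Sigma.fst h1
  subst e
  rw [← sigma_mk_injective h1, ← sigma_mk_injective h2]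

lemma case_direct (j : ∀ i, Y → X i) (a b : Σ i, X i)
    (hV : glueDist j a b < Vab j a b) (hDtop : glueDist j a b ≠ ⊤) :
    ∃ (i : I) (x x' : X i), (⟨i, x⟩ : Σ i, X i) = a ∧ (⟨i, x'⟩ : Σ i, X i) = b ∧
      glueDist j a b = edist x x' := by
  have get : ∀ ε : ℝ≥0∞, ε ≠ 0 → ∃ L ∈ chainSet j a b,
      L < min (Vab j a b) (glueDist j a b + ε) := by
    intro ε hε
    exact sInf_lt_iff.mp (lt_min hV (ENNReal.lt_add_right hDtop hε))
  obtain ⟨L, hL, hlt⟩ := get 1 one_ne_zero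
  obtain ⟨n, idx, p, q, hh, ht, hl, rfl⟩ := hL
  rcases n with _ | n
  · refine ⟨idx 0, p 0, q 0, hh, ht, le_antisymm ?_ ?_⟩
    · have hmem : (∑ s : Fin 1, edist (p s) (q s)) ∈ chainSet j a b :=
        ⟨0, idx, p, q, hh, ht, hl, rfl⟩
      refine le_trans (sInf_le hmem) (le_of_eq ?_)
      exact Fin.sum_univ_one _
    · refine ENNReal.le_of_forall_pos_le_add fun ε hε _ => ?_
      obtain ⟨L', hL', hlt'⟩ := get ε (by exact_mod_cast hε.ne')
      obtain ⟨n', idx', p', q', hh', ht', hl', rfl⟩ := hL'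
      rcases n' with _ | n'
      · have he : edist (p' 0) (q' 0) = edist (p 0) (q 0) :=
          edist_eq_of_sigma_eq (hh'.trans hh.symm) (ht'.trans ht.symm)
        have : (∑ s : Fin 1, edist (p' s) (q' s)) = edist (p 0) (q 0) := by
          rw [Fin.sum_univ_one, he]
        rw [← this]
        exact le_of_lt (lt_of_lt_of_le hlt' (min_le_right _ _))
      · exfalso
        obtain ⟨y, y', hyy⟩ := chain_lower j a b idx' p' q' hh' ht' hl'
        have hVle : Vab j a b ≤ ∑ s, edist (p' s) (q' s) :=
          le_trans (iInf_le_of_le y (iInf_le _ y')) hyy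
        exact absurd (lt_of_lt_of_le hlt' (min_le_left _ _)) (not_lt.mpr hVle)
  · exfalso
    obtain ⟨y, y', hyy⟩ := chain_lower j a b idx p q hh ht hl
    have hVle : Vab j a b ≤ ∑ s, edist (p s) (q s) :=
      le_trans (iInf_le_of_le y (iInf_le _ y')) hyy
    exact absurd (lt_of_lt_of_le hlt (min_le_left _ _)) (not_lt.mpr hVle)

lemma crossing [Nonempty I] (j : ∀ i, Y → X i) (y y' : Y) (r D : ℝ≥0∞)
    (hr0 : r ≠ 0) (hrD : r < D) (hDd : delta j y y' = D) (hDtop : D ≠ ⊤) (k : ℕ) :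
    ∃ uv : Y × Y, delta j y uv.1 ≤ r ∧ r ≤ delta j y uv.2 ∧
      delta j y uv.1 + rho j uv.1 uv.2 + delta j uv.2 y' ≤ D + ((k : ℝ≥0∞) + 1)⁻¹ := by
  have hlt0 : delta j y y' < D + ((k : ℝ≥0∞) + 1)⁻¹ := by
    rw [hDd]
    refine ENNReal.lt_add_right hDtop (ENNReal.inv_ne_zero.mpr ?_)
    simp [ENNReal.add_eq_top]
  rw [show delta j y y' = sInf _ from rfl] at hlt0
  obtain ⟨L, hL, hlt⟩ := sInf_lt_iff.mp hlt0
  obtain ⟨m, z, hz0, hzl, rfl⟩ := hL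
  set P : ℕ → Prop := fun t => ∃ ht : t < m + 1, r < delta j y (z ⟨t, ht⟩) with hP
  have hPm : P m := by
    refine ⟨by omega, ?_⟩
    rw [show (⟨m, by omega⟩ : Fin (m + 1)) = Fin.last m from rfl, hzl, hDd]
    exact hrD
  letI : DecidablePred P := Classical.decPred _
  have hex : ∃ t, P t := ⟨m, hPm⟩
  set T := Nat.find hex with hTdef
  obtain ⟨hTm, hTr⟩ := Nat.find_spec hex
  have hT0 : T ≠ 0 := by
    intro h
    have hspec := Nat.find_spec hex
    rw [← hTdef, h] at hspec
    obtain ⟨h0, hr⟩ := hspec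
    rw [show (⟨0, h0⟩ : Fin (m + 1)) = 0 from rfl, hz0, delta_self] at hr
    exact absurd hr (by simp)
  have hT1 : T - 1 < T := by omega
  have hnot := Nat.find_min hex hT1
  have hT1m : T - 1 < m := by omega
  set t₀ : Fin m := ⟨T - 1, hT1m⟩ with ht₀
  have hsc : t₀.succ = (⟨T, hTm⟩ : Fin (m + 1)) := by
    apply Fin.ext
    show T - 1 + 1 = T
    omega
  refine ⟨(z t₀.castSucc, z t₀.succ), ?_, ?_, ?_⟩
  · simp only [hP] at hnot
    push_neg at hnot
    exact hnot (by omega)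
  · show r ≤ delta j y (z t₀.succ)
    rw [hsc]
    exact hTr.le
  · have split := chain_split j m z t₀
    rw [hz0, hzl] at split
    exact le_trans split hlt.le

lemma squeeze {Dab Dac Dcb α β : ℝ≥0∞} (h1 : Dab ≤ Dac + Dcb) (h2 : Dac ≤ α)
    (h3 : Dcb ≤ β) (h4 : α + β ≤ Dab) (hfin : Dab ≠ ⊤) :
    Dac = α ∧ Dcb = β ∧ Dab = Dac + Dcb := by
  have hβ : β ≠ ⊤ := fun h => hfin (top_le_iff.mp (le_trans (by simp [h]) h4))
  have hα : α ≠ ⊤ := fun h => hfin (top_le_iff.mp (le_trans (by simp [h]) h4))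
  have key : Dac + Dcb = α + β :=
    le_antisymm (add_le_add h2 h3) (h4.trans h1)
  have hac : Dac = α := by
    by_contra hne
    have hlt : Dac < α := lt_of_le_of_ne h2 hne
    have : Dac + Dcb < α + β :=
      lt_of_le_of_lt (add_le_add_right h3 _) (ENNReal.add_lt_add_right hβ hlt)
    exact absurd key this.ne
  have hcb : Dcb = β := by
    by_contra hne
    have hlt : Dcb < β := lt_of_le_of_ne h3 hne
    have : Dac + Dcb < α + β :=
      lt_of_lt_of_le (ENNReal.add_lt_add_left (hac ▸ hα) hlt) (add_le_add_left h2 _)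
    exact absurd key this.ne
  exact ⟨hac, hcb, le_antisymm h1 (key ▸ h4)⟩

theorem glue_convex_aux {I Y : Type*} {X : I → Type*}
    [EMetricSpace Y] [CompleteSpace Y] [CompactSpace Y]
    [∀ i, EMetricSpace (X i)] [∀ i, CompleteSpace (X i)]
    (C : ℝ≥0) (hC0 : 0 < C) (hC1 : C ≤ 1)
    (j : ∀ i, Y → X i)
    (hne : ∀ i, LipschitzWith 1 (j i))
    (hexp : ∀ (i : I) (y y' : Y), (C : ℝ≥0∞) * edist y y' ≤ edist (j i y) (j i y'))
    (hconv : ∀ (i : I) (x x' : X i), x ≠ x' → edist x x' ≠ ⊤ →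
      ∃ z : X i, z ≠ x ∧ z ≠ x' ∧ edist x x' = edist x z + edist z x')
    (hinf : ∀ y y' : Y, ∃ i : I, edist (j i y) (j i y') = ⨅ i' : I, edist (j i' y) (j i' y')) :
    ∀ a b : Σ i, X i, glueDist j a b ≠ 0 → glueDist j a b ≠ ⊤ →
      ∃ c : Σ i, X i, glueDist j a c ≠ 0 ∧ glueDist j c b ≠ 0 ∧
        glueDist j a b = glueDist j a c + glueDist j c b := by
  intro a b hD0 hDtop
  haveI : Nonempty I := ⟨a.1⟩
  by_cases hV : glueDist j a b < Vab j a b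
  · -- direct case
    obtain ⟨i, x, x', ha, hb, hDE⟩ := case_direct j a b hV hDtop
    subst ha; subst hb
    have hxx : x ≠ x' := by
      intro h; subst h; rw [hDE, edist_self] at hD0; exact hD0 rfl
    have hfin : edist x x' ≠ ⊤ := hDE ▸ hDtop
    obtain ⟨z, hz1, hz2, hsplit⟩ := hconv i x x' hxx hfin
    have hsq := squeeze (glue_triangle j ⟨i, x⟩ ⟨i, z⟩ ⟨i, x'⟩)
      (glue_le_single j i x z) (glue_le_single j i z x')
      (le_of_eq (by rw [hDE, hsplit])) hDtop
    refine ⟨⟨i, z⟩, ?_, ?_, hsq.2.2⟩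
    · rw [hsq.1]
      exact fun h => hz1 (edist_eq_zero.mp h).symm
    · rw [hsq.2.1]
      exact fun h => hz2 (edist_eq_zero.mp h)
  · -- via Y case
    obtain ⟨ia, xa⟩ := a
    obtain ⟨ib, xb⟩ := b
    rw [not_lt] at hV
    haveI : Nonempty Y := by
      by_contra hY
      rw [not_nonempty_iff] at hY
      have hVtop : Vab j (⟨ia, xa⟩ : Σ i, X i) ⟨ib, xb⟩ = ⊤ := by
        rw [show Vab j (⟨ia, xa⟩ : Σ i, X i) ⟨ib, xb⟩ = ⨅ (y : Y) (y' : Y), _ from rfl]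
        exact iInf_of_empty _
      exact hDtop (top_le_iff.mp (hVtop ▸ hV))
    have hDV : glueDist j (⟨ia, xa⟩ : Σ i, X i) ⟨ib, xb⟩ =
        Vab j (⟨ia, xa⟩ : Σ i, X i) ⟨ib, xb⟩ :=
      le_antisymm (le_iInf fun y => le_iInf fun y' => glue_le_delta j hinf _ _ y y') hV
    obtain ⟨y, y', hF0⟩ := V_attained j hne (⟨ia, xa⟩ : Σ i, X i) ⟨ib, xb⟩
    have hF : edist xa (j ia y) + delta j y y' + edist (j ib y') xb =
        glueDist j (⟨ia, xa⟩ : Σ i, X i) ⟨ib, xb⟩ := by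
      rw [hDV]; exact hF0
    by_cases h1 : edist xa (j ia y) = 0
    · by_cases h3 : edist (j ib y') xb = 0
      · -- both ends glued: compactness argument
        have hxa : xa = j ia y := edist_eq_zero.mp h1
        have hxb : j ib y' = xb := edist_eq_zero.mp h3
        have hDd : delta j y y' = glueDist j (⟨ia, xa⟩ : Σ i, X i) ⟨ib, xb⟩ := by
          rw [← hF, h1, h3, zero_add, add_zero]
        set Dv := glueDist j (⟨ia, xa⟩ : Σ i, X i) ⟨ib, xb⟩ with hDvdef
        set r := Dv / 2 with hrdef
        have hr0 : r ≠ 0 := (ENNReal.half_pos hD0).ne'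
        have hrD : r < Dv := ENNReal.half_lt_self hD0 hDtop
        have key := fun k => crossing j y y' r Dv hr0 hrD hDd hDtop k
        choose g hg1 hg2 hg3 using key
        obtain ⟨uv, -, φ, hφ, hlim⟩ := isCompact_univ.tendsto_subseq
          (fun n => Set.mem_univ (g n))
        have hlim1 : Filter.Tendsto (fun k => (g (φ k)).1) Filter.atTop (nhds uv.1) :=
          (continuous_fst.tendsto uv).comp hlim
        have hlim2 : Filter.Tendsto (fun k => (g (φ k)).2) Filter.atTop (nhds uv.2) :=
          (continuous_snd.tendsto uv).comp hlim
        set u := uv.1 with hu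
        set v := uv.2 with hv
        have keyk : ∀ ε : ℝ≥0∞, ε ≠ 0 → ∃ k, edist (g (φ k)).1 u < ε ∧
            edist (g (φ k)).2 v < ε ∧ ((φ k : ℝ≥0∞) + 1)⁻¹ < ε := by
          intro ε hε
          obtain ⟨N1, hN1⟩ := EMetric.tendsto_atTop.mp hlim1 ε (pos_iff_ne_zero.mpr hε)
          obtain ⟨N2, hN2⟩ := EMetric.tendsto_atTop.mp hlim2 ε (pos_iff_ne_zero.mpr hε)
          obtain ⟨n0, hn0⟩ := ENNReal.exists_inv_nat_lt hε
          refine ⟨max (max N1 N2) n0, hN1 _ (le_trans (le_max_left _ _) (le_max_left _ _)),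
            hN2 _ (le_trans (le_max_right _ _) (le_max_left _ _)), ?_⟩
          have hk : (n0 : ℝ≥0∞) ≤ (φ (max (max N1 N2) n0) : ℝ≥0∞) + 1 := by
            refine le_trans ?_ le_self_add
            exact_mod_cast le_trans (le_max_right _ _) (hφ.le_apply)
          exact lt_of_le_of_lt (ENNReal.inv_le_inv.mpr hk) hn0
        have hAu : delta j y u ≤ r := by
          refine ENNReal.le_of_forall_pos_le_add fun ε hε _ => ?_
          obtain ⟨k, hk1, -, -⟩ := keyk ε (by exact_mod_cast hε.ne')
          calc delta j y u ≤ delta j y (g (φ k)).1 + rho j (g (φ k)).1 u :=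
                delta_snoc j _ _ _
            _ ≤ r + (ε : ℝ≥0∞) := add_le_add (hg1 _)
                (le_trans (rho_le_edist j hne _ _) hk1.le)
        have hrv : r ≤ delta j y v := by
          rcases eq_or_ne (delta j y v) ⊤ with h | h
          · rw [h]; exact le_top
          · refine ENNReal.le_of_forall_pos_le_add fun ε hε _ => ?_
            obtain ⟨k, -, hk2, -⟩ := keyk ε (by exact_mod_cast hε.ne')
            calc r ≤ delta j y (g (φ k)).2 := hg2 _
              _ ≤ delta j y v + rho j v (g (φ k)).2 := delta_snoc j _ _ _
              _ ≤ delta j y v + (ε : ℝ≥0∞) := by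
                  refine add_le_add le_rfl (le_trans (rho_le_edist j hne _ _) ?_)
                  rw [edist_comm]
                  exact hk2.le
        have hsum : delta j y u + rho j u v + delta j v y' ≤ Dv := by
          refine ENNReal.le_of_forall_pos_le_add fun ε hε _ => ?_
          set ε' : ℝ≥0 := ε / 5 with hε'def
          have hε' : (ε' : ℝ≥0∞) ≠ 0 := by
            refine ENNReal.coe_ne_zero.mpr ?_
            have : 0 < ε' := by positivity
            exact this.ne'
          obtain ⟨k, hk1, hk2, hk3⟩ := keyk (ε' : ℝ≥0∞) hε'
          have B := hg3 (φ k)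
          have step1 : delta j y u ≤ delta j y (g (φ k)).1 + (ε' : ℝ≥0∞) := by
            calc delta j y u ≤ delta j y (g (φ k)).1 + rho j (g (φ k)).1 u :=
                  delta_snoc j _ _ _
              _ ≤ _ := add_le_add le_rfl (le_trans (rho_le_edist j hne _ _) hk1.le)
          have step2 : rho j u v ≤
              rho j (g (φ k)).1 (g (φ k)).2 + (ε' : ℝ≥0∞) + (ε' : ℝ≥0∞) := by
            calc rho j u v ≤ edist u (g (φ k)).1 + rho j (g (φ k)).1 (g (φ k)).2 +
                  edist (g (φ k)).2 v := rho_le_add j hne hinf _ _ _ _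
              _ ≤ (ε' : ℝ≥0∞) + rho j (g (φ k)).1 (g (φ k)).2 + (ε' : ℝ≥0∞) := by
                  refine add_le_add (add_le_add ?_ le_rfl) hk2.le
                  rw [edist_comm]
                  exact hk1.le
              _ = _ := by ring
          have step3 : delta j v y' ≤ delta j (g (φ k)).2 y' + (ε' : ℝ≥0∞) := by
            calc delta j v y' ≤ rho j v (g (φ k)).2 + delta j (g (φ k)).2 y' :=
                  delta_cons j _ _ _
              _ ≤ (ε' : ℝ≥0∞) + delta j (g (φ k)).2 y' := by
                  refine add_le_add (le_trans (rho_le_edist j hne _ _) ?_) le_rfl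
                  rw [edist_comm]
                  exact hk2.le
              _ = delta j (g (φ k)).2 y' + (ε' : ℝ≥0∞) := add_comm _ _
          calc delta j y u + rho j u v + delta j v y'
              ≤ (delta j y (g (φ k)).1 + (ε' : ℝ≥0∞)) +
                (rho j (g (φ k)).1 (g (φ k)).2 + (ε' : ℝ≥0∞) + (ε' : ℝ≥0∞)) +
                (delta j (g (φ k)).2 y' + (ε' : ℝ≥0∞)) :=
              add_le_add (add_le_add step1 step2) step3
            _ = (delta j y (g (φ k)).1 + rho j (g (φ k)).1 (g (φ k)).2 +
                delta j (g (φ k)).2 y') + 4 * (ε' : ℝ≥0∞) := by ring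
            _ ≤ (Dv + ((φ k : ℝ≥0∞) + 1)⁻¹) + 4 * (ε' : ℝ≥0∞) := add_le_add B le_rfl
            _ ≤ Dv + (ε' : ℝ≥0∞) + 4 * (ε' : ℝ≥0∞) := add_le_add (add_le_add le_rfl hk3.le) le_rfl
            _ = Dv + 5 * (ε' : ℝ≥0∞) := by ring
            _ ≤ Dv + (ε : ℝ≥0∞) := by
                refine add_le_add le_rfl ?_
                rw [hε'def]
                rw [show (5 : ℝ≥0∞) * ((ε / 5 : ℝ≥0) : ℝ≥0∞) = ((5 * (ε / 5) : ℝ≥0) : ℝ≥0∞) by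
                  push_cast; ring]
                rw [mul_div_cancel₀ _ (by norm_num : (5 : ℝ≥0) ≠ 0)]
        by_cases hB : rho j u v = 0
        · -- cut point on Y
          have hδv : delta j y v = r := by
            refine le_antisymm ?_ hrv
            refine le_trans (delta_snoc j y u v) ?_
            rw [hB, add_zero]
            exact hAu
          have hvy' : r + delta j v y' ≤ Dv := by
            calc r + delta j v y' = delta j y v + delta j v y' := by rw [hδv]
              _ ≤ (delta j y u + rho j u v) + delta j v y' :=
                add_le_add (delta_snoc j y u v) le_rfl
              _ ≤ Dv := hsum
          have hrtop : r ≠ ⊤ := (hrD.trans (lt_top_iff_ne_top.mpr hDtop)).ne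
          have hδvy' : delta j v y' ≤ Dv - r := ENNReal.le_sub_of_add_le_left hrtop hvy'
          have hDac : glueDist j (⟨ia, xa⟩ : Σ i, X i) ⟨ia, j ia v⟩ ≤ r := by
            have hh : glueDist j (⟨ia, xa⟩ : Σ i, X i) ⟨ia, j ia v⟩ ≤
                edist xa (j ia y) + delta j y v + edist (j ia v) (j ia v) :=
              glue_le_delta j hinf (⟨ia, xa⟩ : Σ i, X i) ⟨ia, j ia v⟩ y v
            rw [h1, zero_add, edist_self, add_zero, hδv] at hh
            exact hh
          have hDcb : glueDist j (⟨ia, j ia v⟩ : Σ i, X i) ⟨ib, xb⟩ ≤ Dv - r := by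
            have hh : glueDist j (⟨ia, j ia v⟩ : Σ i, X i) ⟨ib, xb⟩ ≤
                edist (j ia v) (j ia v) + delta j v y' + edist (j ib y') xb :=
              glue_le_delta j hinf (⟨ia, j ia v⟩ : Σ i, X i) ⟨ib, xb⟩ v y'
            rw [edist_self, zero_add, h3, add_zero] at hh
            exact le_trans hh hδvy'
          have hsq := squeeze (glue_triangle j _ ⟨ia, j ia v⟩ _) hDac hDcb
            (le_of_eq (add_tsub_cancel_of_le hrD.le)) hDtop
          refine ⟨⟨ia, j ia v⟩, ?_, ?_, hsq.2.2⟩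
          · rw [hsq.1]; exact hr0
          · rw [hsq.2.1]
            exact (tsub_pos_of_lt hrD).ne'
        · -- cut point inside some X i
          obtain ⟨i, hi⟩ := hinf u v
          have hrho : edist (j i u) (j i v) = rho j u v := hi
          have hne2 : j i u ≠ j i v := fun h => hB (by rw [← hrho, h, edist_self])
          have hrle : rho j u v ≤ Dv :=
            le_trans (le_trans le_add_self le_self_add) hsum
          have hfin2 : edist (j i u) (j i v) ≠ ⊤ := by
            rw [hrho]
            exact fun h => hDtop (top_le_iff.mp (h ▸ hrle))
          obtain ⟨z, hz1, hz2, hsplit⟩ := hconv i (j i u) (j i v) hne2 hfin2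
          have hDac : glueDist j (⟨ia, xa⟩ : Σ i, X i) ⟨i, z⟩ ≤
              delta j y u + edist (j i u) z := by
            have hh : glueDist j (⟨ia, xa⟩ : Σ i, X i) ⟨i, z⟩ ≤
                edist xa (j ia y) + delta j y u + edist (j i u) z :=
              glue_le_delta j hinf (⟨ia, xa⟩ : Σ i, X i) ⟨i, z⟩ y u
            rw [h1, zero_add] at hh
            exact hh
          have hDcb : glueDist j (⟨i, z⟩ : Σ i, X i) ⟨ib, xb⟩ ≤
              edist z (j i v) + delta j v y' := by
            have hh : glueDist j (⟨i, z⟩ : Σ i, X i) ⟨ib, xb⟩ ≤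
                edist z (j i v) + delta j v y' + edist (j ib y') xb :=
              glue_le_delta j hinf (⟨i, z⟩ : Σ i, X i) ⟨ib, xb⟩ v y'
            rw [h3, add_zero] at hh
            exact hh
          have h4 : (delta j y u + edist (j i u) z) + (edist z (j i v) + delta j v y') ≤
              Dv := by
            calc (delta j y u + edist (j i u) z) + (edist z (j i v) + delta j v y')
                = delta j y u + (edist (j i u) z + edist z (j i v)) + delta j v y' := by ring
              _ = delta j y u + rho j u v + delta j v y' := by rw [← hsplit, hrho]
              _ ≤ Dv := hsum
          have hsq := squeeze (glue_triangle j _ ⟨i, z⟩ _) hDac hDcb h4 hDtop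
          refine ⟨⟨i, z⟩, ?_, ?_, hsq.2.2⟩
          · rw [hsq.1]
            intro h
            rw [add_eq_zero] at h
            exact hz1 (edist_eq_zero.mp h.2).symm
          · rw [hsq.2.1]
            intro h
            rw [add_eq_zero] at h
            exact hz2 (edist_eq_zero.mp h.1)
      · -- right end not glued
        have hne3 : j ib y' ≠ xb := fun h => h3 (by rw [h, edist_self])
        have hle3 : edist (j ib y') xb ≤ glueDist j (⟨ia, xa⟩ : Σ i, X i) ⟨ib, xb⟩ := by
          rw [← hF]; exact le_add_self
        obtain ⟨z, hz1, hz2, hsplit⟩ := hconv ib (j ib y') xb hne3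
          (fun h => hDtop (top_le_iff.mp (h ▸ hle3)))
        have hDac : glueDist j (⟨ia, xa⟩ : Σ i, X i) ⟨ib, z⟩ ≤
            edist xa (j ia y) + delta j y y' + edist (j ib y') z := by
          exact glue_le_delta j hinf (⟨ia, xa⟩ : Σ i, X i) ⟨ib, z⟩ y y'
        have hDcb : glueDist j (⟨ib, z⟩ : Σ i, X i) ⟨ib, xb⟩ ≤ edist z xb :=
          glue_le_single j ib z xb
        have h4 : (edist xa (j ia y) + delta j y y' + edist (j ib y') z) + edist z xb =
            glueDist j (⟨ia, xa⟩ : Σ i, X i) ⟨ib, xb⟩ := by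
          rw [← hF]
          calc (edist xa (j ia y) + delta j y y' + edist (j ib y') z) + edist z xb
              = edist xa (j ia y) + delta j y y' + (edist (j ib y') z + edist z xb) := by ring
            _ = _ := by rw [← hsplit]
        have hsq := squeeze (glue_triangle j _ ⟨ib, z⟩ _) hDac hDcb (le_of_eq h4) hDtop
        refine ⟨⟨ib, z⟩, ?_, ?_, hsq.2.2⟩
        · rw [hsq.1]
          intro h
          rw [add_eq_zero] at h
          exact hz1 (edist_eq_zero.mp h.2).symm
        · rw [hsq.2.1]
          exact fun h => hz2 (edist_eq_zero.mp h)
    · -- left end not glued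
      have hne1 : xa ≠ j ia y := fun h => h1 (by rw [← h, edist_self])
      have hle1 : edist xa (j ia y) ≤ glueDist j (⟨ia, xa⟩ : Σ i, X i) ⟨ib, xb⟩ := by
        rw [← hF]; exact le_trans le_self_add le_self_add
      obtain ⟨z, hz1, hz2, hsplit⟩ := hconv ia xa (j ia y) hne1
        (fun h => hDtop (top_le_iff.mp (h ▸ hle1)))
      have hDac : glueDist j (⟨ia, xa⟩ : Σ i, X i) ⟨ia, z⟩ ≤ edist xa z :=
        glue_le_single j ia xa z
      have hDcb : glueDist j (⟨ia, z⟩ : Σ i, X i) ⟨ib, xb⟩ ≤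
          edist z (j ia y) + delta j y y' + edist (j ib y') xb := by
        exact glue_le_delta j hinf (⟨ia, z⟩ : Σ i, X i) ⟨ib, xb⟩ y y'
      have h4 : edist xa z + (edist z (j ia y) + delta j y y' + edist (j ib y') xb) =
          glueDist j (⟨ia, xa⟩ : Σ i, X i) ⟨ib, xb⟩ := by
        rw [← hF]
        calc edist xa z + (edist z (j ia y) + delta j y y' + edist (j ib y') xb)
            = (edist xa z + edist z (j ia y)) + delta j y y' + edist (j ib y') xb := by ring
          _ = _ := by rw [← hsplit]
      have hsq := squeeze (glue_triangle j _ ⟨ia, z⟩ _) hDac hDcb (le_of_eq h4) hDtop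
      refine ⟨⟨ia, z⟩, ?_, ?_, hsq.2.2⟩
      · rw [hsq.1]
        exact fun h => hz1 (edist_eq_zero.mp h).symm
      · rw [hsq.2.1]
        intro h
        rw [add_eq_zero, add_eq_zero] at h
        exact hz2 (edist_eq_zero.mp h.1.1)

end GlueConvexAux

/-- If the `X i` are convex complete extended metric spaces, `Y` is compact, the maps
`j i : Y → X i` are nonexpansive and `C`-expansive, and the infimum
`inf_i d_{X i}(j i y, j i y')` is always attained, then the glued space `⊔_Y X i` is
convex (stated on the disjoint union via the gluing pseudodistance, points of the quotient
being identified with points at pseudodistance `0`). -/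
theorem glue_convex {I Y : Type*} {X : I → Type*}
    [EMetricSpace Y] [CompleteSpace Y] [CompactSpace Y]
    [∀ i, EMetricSpace (X i)] [∀ i, CompleteSpace (X i)]
    (C : ℝ≥0) (hC0 : 0 < C) (hC1 : C ≤ 1)
    (j : ∀ i, Y → X i)
    (hne : ∀ i, LipschitzWith 1 (j i))
    (hexp : ∀ (i : I) (y y' : Y), (C : ℝ≥0∞) * edist y y' ≤ edist (j i y) (j i y'))
    (hconv : ∀ (i : I) (x x' : X i), x ≠ x' → edist x x' ≠ ⊤ →
      ∃ z : X i, z ≠ x ∧ z ≠ x' ∧ edist x x' = edist x z + edist z x')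
    (hinf : ∀ y y' : Y, ∃ i : I, edist (j i y) (j i y') = ⨅ i' : I, edist (j i' y) (j i' y')) :
    ∀ a b : Σ i, X i, glueDist j a b ≠ 0 → glueDist j a b ≠ ⊤ →
      ∃ c : Σ i, X i, glueDist j a c ≠ 0 ∧ glueDist j c b ≠ 0 ∧
        glueDist j a b = glueDist j a c + glueDist j c b :=
  GlueConvexAux.glue_convex_aux C hC0 hC1 j hne hexp hconv hinf
end
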